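/- arXiv:2008.03292 — 3 statements merged into one kernel-verified Lean document; each statement's English description precedes it below -/
import Mathlib

section
/- For every permutation w ∈ S_n, the number of cycles of w equals the number of left-to-right maxima (records) of F(w), where F is the Rényi–Foata map. -/
/-- The cycle of `w` containing `x`, listed starting at `x`:
`[x, w x, w² x, …]` with each element appearing once. -/
def cyc {n : ℕ} (w : Equiv.Perm (Fin n)) (x : Fin n) : List (Fin n) :=
  (List.range n).foldl (fun acc k => if (w ^ k) x ∈ acc then acc else acc ++ [(w ^ k) x]) []

/-- The Rényi–Foata word of `w`: write the canonical cycle decomposition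
(each cycle starting with its largest element, cycles listed in increasing
order of largest elements) and drop the parentheses. -/
def foataWord {n : ℕ} (w : Equiv.Perm (Fin n)) : List (Fin n) :=
  ((List.finRange n).filter (fun x => decide (∀ y ∈ cyc w x, y ≤ x))).flatMap (cyc w)

/-- The Rényi–Foata map, as a function `Fin n → Fin n` reading off the word. -/
def foataFun {n : ℕ} (w : Equiv.Perm (Fin n)) : Fin n → Fin n :=
  fun i => (foataWord w).getD i.val ⟨0, i.pos⟩

/-- One-line notation of a permutation, as a list of values in `Fin n`. -/
def oneLineF {n : ℕ} (w : Equiv.Perm (Fin n)) : List (Fin n) :=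
  (List.finRange n).map w

/-- One-line notation with natural-number entries (0-indexed values). -/
def oneLineN {n : ℕ} (w : Equiv.Perm (Fin n)) : List ℕ :=
  (List.finRange n).map fun i => (w i : ℕ)

/-- The Rényi–Foata word with natural-number entries. -/
def wordN {n : ℕ} (w : Equiv.Perm (Fin n)) : List ℕ :=
  (foataWord w).map Fin.val

/-- `i` is a record (left-to-right maximum) position of the word `L`. -/
def recB (L : List ℕ) (i : ℕ) : Bool :=
  decide (i < L.length ∧ ∀ j < i, L.getD j 0 < L.getD i 0)

/-- Number of records (left-to-right maxima) of the word `L`. -/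
def recordCount (L : List ℕ) : ℕ :=
  ((List.range L.length).filter (recB L)).length

/-- Number of fixed points (1-cycles) of `w`. -/
def fixCount {n : ℕ} (w : Equiv.Perm (Fin n)) : ℕ :=
  (Finset.univ.filter fun i : Fin n => w i = i).card

/-- Number of cycles of `w` (nontrivial cycles plus fixed points). -/
def numCycles {n : ℕ} (w : Equiv.Perm (Fin n)) : ℕ :=
  Multiset.card w.cycleType + fixCount w

/-! ### Auxiliary: `foldl`-insertion lemmas -/

section Fold
variable {α : Type*} [DecidableEq α]

def gstep (acc : List α) (a : α) : List α := if a ∈ acc then acc else acc ++ [a]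

lemma mem_foldl_gstep (l : List α) (acc : List α) (y : α) :
    y ∈ l.foldl gstep acc ↔ y ∈ acc ∨ y ∈ l := by
  induction l generalizing acc with
  | nil => simp
  | cons a l ih =>
    simp only [List.foldl_cons, ih, gstep, List.mem_cons]
    split
    · rename_i hmem
      constructor
      · tauto
      · rintro (h | rfl | h) <;> tauto
    · simp only [List.mem_append, List.mem_singleton]
      tauto

lemma nodup_foldl_gstep (l : List α) (acc : List α) (h : acc.Nodup) :
    (l.foldl gstep acc).Nodup := by
  induction l generalizing acc with
  | nil => exact h
  | cons a l ih =>
    simp only [List.foldl_cons, gstep]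
    split
    · exact ih _ h
    · refine ih _ ?_
      simp only [List.nodup_append, h, true_and]
      simp_all
      exact fun b hb hba => by simp_all

lemma foldl_gstep_prefix (l : List α) (acc : List α) :
    ∃ s, l.foldl gstep acc = acc ++ s := by
  induction l generalizing acc with
  | nil => exact ⟨[], by simp⟩
  | cons a l ih =>
    simp only [List.foldl_cons, gstep]
    split
    · exact ih acc
    · obtain ⟨s, hs⟩ := ih (acc ++ [a])
      exact ⟨a :: s, by simp [hs]⟩

end Fold

/-! ### Auxiliary: properties of `cyc` -/

section Cyc
variable {n : ℕ}

lemma cyc_eq_foldl (w : Equiv.Perm (Fin n)) (x : Fin n) :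
    cyc w x = ((List.range n).map (fun k => (w ^ k) x)).foldl gstep [] := by
  rw [List.foldl_map]; rfl

lemma mem_cyc (w : Equiv.Perm (Fin n)) (x y : Fin n) :
    y ∈ cyc w x ↔ ∃ k < n, (w ^ k) x = y := by
  rw [cyc_eq_foldl, mem_foldl_gstep]; simp

lemma cyc_nodup (w : Equiv.Perm (Fin n)) (x : Fin n) : (cyc w x).Nodup := by
  rw [cyc_eq_foldl]; exact nodup_foldl_gstep _ _ (by simp)

lemma cyc_cons (w : Equiv.Perm (Fin n)) (x : Fin n) :
    ∃ t, cyc w x = x :: t := by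
  obtain ⟨m, rfl⟩ : ∃ m, n = m + 1 := ⟨n - 1, (Nat.succ_pred_eq_of_pos x.pos).symm⟩
  rw [cyc_eq_foldl, List.range_succ_eq_map]
  simp only [List.map_cons, List.foldl_cons, gstep, pow_zero, Equiv.Perm.coe_one, id_eq,
    List.not_mem_nil, if_neg, List.nil_append]
  obtain ⟨s, hs⟩ := foldl_gstep_prefix ((List.map Nat.succ (List.range m)).map
    (fun k => (w ^ k) x)) [x]
  exact ⟨s, by simpa using hs⟩

lemma sameCycle_iff_mem_cyc (w : Equiv.Perm (Fin n)) (x y : Fin n) :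
    w.SameCycle x y ↔ y ∈ cyc w x := by
  rw [mem_cyc]
  constructor
  · intro h
    by_cases hx : x ∈ w.support
    · obtain ⟨i, hi, hiy⟩ := h.exists_pow_eq_of_mem_support hx
      exact ⟨i, hi.trans_le ((Finset.card_le_univ _).trans (by simp)), hiy⟩
    · rw [Equiv.Perm.notMem_support] at hx
      obtain ⟨k, rfl⟩ := h
      exact ⟨0, x.pos, by simp [Equiv.Perm.zpow_apply_eq_self_of_apply_eq_self hx]⟩
  · rintro ⟨k, -, rfl⟩
    exact ⟨(k : ℤ), by simp⟩

end Cyc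

/-! ### Auxiliary: a recursion computing the number of records -/

/-- Number of records of `L` whose value moreover exceeds the bound `b`. -/
def rc (b : ℕ) : List ℕ → ℕ
  | [] => 0
  | a :: L => (if b < a then 1 else 0) + rc (max b a) L

/-- Bounded record predicate. -/
def recB' (b : ℕ) (L : List ℕ) (i : ℕ) : Bool :=
  decide (i < L.length ∧ b < L.getD i 0 ∧ ∀ j < i, L.getD j 0 < L.getD i 0)

lemma filter_range_succ (p : ℕ → Bool) (m : ℕ) :
    ((List.range (m+1)).filter p).length
      = (if p 0 then 1 else 0) + ((List.range m).filter (fun j => p (j+1))).length := by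
  rw [List.range_succ_eq_map, List.filter_cons, List.filter_map]
  have : (p ∘ Nat.succ) = fun j => p (j + 1) := rfl
  split <;> simp [this, Nat.add_comm]

lemma recB'_succ (b a : ℕ) (L : List ℕ) (j : ℕ) :
    recB' b (a :: L) (j+1) = recB' (max b a) L j := by
  simp only [recB', decide_eq_decide, List.length_cons, Nat.add_lt_add_iff_right,
    List.getD_cons_succ, Nat.max_lt]
  constructor
  · rintro ⟨h1, h2, h3⟩
    exact ⟨h1, ⟨h2, by simpa using h3 0 (by omega)⟩,
      fun j' hj' => by simpa using h3 (j'+1) (by omega)⟩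
  · rintro ⟨h1, ⟨h2, ha⟩, h3⟩
    refine ⟨h1, h2, fun j' hj' => ?_⟩
    cases j' with
    | zero => simpa using ha
    | succ j'' => simpa using h3 j'' (by omega)

lemma recB_succ (a : ℕ) (L : List ℕ) (j : ℕ) :
    recB (a :: L) (j+1) = recB' a L j := by
  simp only [recB, recB', decide_eq_decide, List.length_cons, Nat.add_lt_add_iff_right,
    List.getD_cons_succ]
  constructor
  · rintro ⟨h1, h3⟩
    exact ⟨h1, by simpa using h3 0 (by omega),
      fun j' hj' => by simpa using h3 (j'+1) (by omega)⟩
  · rintro ⟨h1, ha, h3⟩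
    refine ⟨h1, fun j' hj' => ?_⟩
    cases j' with
    | zero => simpa using ha
    | succ j'' => simpa using h3 j'' (by omega)

lemma rc_eq (L : List ℕ) : ∀ b, ((List.range L.length).filter (recB' b L)).length = rc b L := by
  induction L with
  | nil => intro b; rfl
  | cons a L ih =>
    intro b
    rw [List.length_cons, filter_range_succ]
    have h0 : recB' b (a :: L) 0 = decide (b < a) := by
      simp [recB']
    have h1 : (fun j => recB' b (a :: L) (j+1)) = recB' (max b a) L :=
      funext fun j => recB'_succ b a L j
    rw [h0, h1, ih]
    simp only [rc]
    split <;> rename_i h <;> simp_all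

lemma recordCount_cons (a : ℕ) (L : List ℕ) : recordCount (a :: L) = 1 + rc a L := by
  rw [recordCount, List.length_cons, filter_range_succ]
  have h0 : recB (a :: L) 0 = true := by simp [recB]
  have h1 : (fun j => recB (a :: L) (j+1)) = recB' a L := funext fun j => recB_succ a L j
  rw [h0, h1, rc_eq, if_pos rfl]

lemma rc_append_le (T M : List ℕ) (b : ℕ) (hT : ∀ t ∈ T, t ≤ b) :
    rc b (T ++ M) = rc b M := by
  induction T with
  | nil => rfl
  | cons t T ih =>
    have ht : t ≤ b := hT t (by simp)
    simp only [List.cons_append, rc, if_neg (by omega : ¬ b < t), Nat.max_eq_left ht,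
      Nat.zero_add]
    exact ih (fun t' h => hT t' (by simp [h]))

lemma rc_flatten (Bs : List (List ℕ)) (b : ℕ)
    (hmax : ∀ B ∈ Bs, ∀ t ∈ B.tail, t < B.headI)
    (hchain : (b :: Bs.map List.headI).Chain' (· < ·))
    (hne : ∀ B ∈ Bs, B ≠ []) :
    rc b Bs.flatten = Bs.length := by
  induction Bs generalizing b with
  | nil => rfl
  | cons B Bs ih =>
    obtain ⟨h, T, rfl⟩ : ∃ h T, B = h :: T := by
      cases B with
      | nil => exact absurd rfl (hne [] (by simp))
      | cons h T => exact ⟨h, T, rfl⟩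
    rw [List.map_cons] at hchain
    simp only [List.headI] at hchain
    rw [List.Chain', List.isChain_cons_cons] at hchain
    obtain ⟨hbh, hchain⟩ := hchain
    rw [List.flatten_cons, List.cons_append]
    simp only [rc, if_pos hbh, Nat.max_eq_right hbh.le]
    rw [rc_append_le _ _ _ (fun t ht => le_of_lt (by simpa using hmax (h :: T) (by simp) t ht))]
    rw [ih h (fun B hB => hmax B (by simp [hB])) hchain (fun B hB => hne B (by simp [hB]))]
    simp [Nat.add_comm]

lemma recordCount_flatten (Bs : List (List ℕ))
    (hmax : ∀ B ∈ Bs, ∀ t ∈ B.tail, t < B.headI)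
    (hchain : (Bs.map List.headI).Chain' (· < ·))
    (hne : ∀ B ∈ Bs, B ≠ []) :
    recordCount Bs.flatten = Bs.length := by
  cases Bs with
  | nil => rfl
  | cons B Bs =>
    obtain ⟨h, T, rfl⟩ : ∃ h T, B = h :: T := by
      cases B with
      | nil => exact absurd rfl (hne [] (by simp))
      | cons h T => exact ⟨h, T, rfl⟩
    rw [List.map_cons] at hchain
    simp only [List.headI] at hchain
    rw [List.flatten_cons, List.cons_append, recordCount_cons]
    rw [rc_append_le _ _ _ (fun t ht => le_of_lt (by simpa using hmax (h :: T) (by simp) t ht))]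
    rw [rc_flatten Bs h (fun B hB => hmax B (by simp [hB])) hchain
      (fun B hB => hne B (by simp [hB]))]
    simp [Nat.add_comm]

/-! ### Auxiliary: counting the cycle leaders -/

section Count
variable {n : ℕ}

lemma fixed_isLeader (w : Equiv.Perm (Fin n)) {x : Fin n} (hx : w x = x) :
    ∀ y, w.SameCycle x y → y ≤ x := by
  rintro y ⟨k, rfl⟩
  rw [Equiv.Perm.zpow_apply_eq_self_of_apply_eq_self hx]

lemma card_leaders (w : Equiv.Perm (Fin n)) :
    (Finset.univ.filter (fun x => ∀ y, w.SameCycle x y → y ≤ x)).card = numCycles w := by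
  classical
  set P : Fin n → Prop := fun x => ∀ y, w.SameCycle x y → y ≤ x with hP
  have hsplit := Finset.card_filter_add_card_filter_not
    (s := Finset.univ.filter P) (p := fun x => w x = x)
  have hfix : (Finset.univ.filter P).filter (fun x => w x = x)
      = Finset.univ.filter (fun x : Fin n => w x = x) := by
    ext x
    simp only [Finset.mem_filter, Finset.mem_univ, true_and]
    exact ⟨fun h => h.2, fun h => ⟨fixed_isLeader w h, h⟩⟩
  have hmoved : ((Finset.univ.filter P).filter (fun x => ¬ w x = x)).card
      = w.cycleFactorsFinset.card := by
    apply Finset.card_bij (fun x _ => w.cycleOf x)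
    · intro a ha
      simp only [Finset.mem_filter, Finset.mem_univ, true_and] at ha
      exact Equiv.Perm.cycleOf_mem_cycleFactorsFinset_iff.2 (Equiv.Perm.mem_support.2 ha.2)
    · intro a ha b hb hab
      simp only [Finset.mem_filter, Finset.mem_univ, true_and] at ha hb
      have hsame : w.SameCycle a b := by
        have hb' : b ∈ (w.cycleOf a).support := by
          rw [hab, Equiv.Perm.mem_support_cycleOf_iff]
          exact ⟨Equiv.Perm.SameCycle.refl _ _, Equiv.Perm.mem_support.2 hb.2⟩
        exact (Equiv.Perm.mem_support_cycleOf_iff.1 hb').1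
      exact le_antisymm (hb.1 a hsame.symm) (ha.1 b hsame)
    · intro c hc
      have hcyc : c.IsCycle := (Equiv.Perm.mem_cycleFactorsFinset_iff.1 hc).1
      have hne : c.support.Nonempty := hcyc.nonempty_support
      set x := c.support.max' hne with hx
      have hxs : x ∈ c.support := c.support.max'_mem hne
      have hxw : x ∈ w.support := Equiv.Perm.mem_cycleFactorsFinset_support_le hc hxs
      have hcx : c = w.cycleOf x := Equiv.Perm.cycle_is_cycleOf hxs hc
      refine ⟨x, ?_, hcx.symm⟩
      simp only [Finset.mem_filter, Finset.mem_univ, true_and]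
      refine ⟨fun y hy => ?_, Equiv.Perm.mem_support.1 hxw⟩
      have hy' : y ∈ (w.cycleOf x).support :=
        Equiv.Perm.mem_support_cycleOf_iff.2 ⟨hy, hxw⟩
      rw [← hcx] at hy'
      exact Finset.le_max' _ _ hy'
  have hct : Multiset.card w.cycleType = w.cycleFactorsFinset.card := by
    rw [Equiv.Perm.cycleType_def, Multiset.card_map]; rfl
  rw [← hsplit, hfix, hmoved, numCycles, hct, fixCount, Nat.add_comm]

lemma length_leaders (w : Equiv.Perm (Fin n)) :
    ((List.finRange n).filter (fun x => decide (∀ y ∈ cyc w x, y ≤ x))).length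
      = numCycles w := by
  classical
  rw [← card_leaders w]
  have hnd : ((List.finRange n).filter (fun x => decide (∀ y ∈ cyc w x, y ≤ x))).Nodup :=
    (List.nodup_finRange n).filter _
  rw [← List.toFinset_card_of_nodup hnd, List.toFinset_filter, List.toFinset_finRange]
  congr 1
  apply Finset.filter_congr
  intro x _
  simp only [decide_eq_true_eq]
  constructor
  · intro h y hy
    exact h y ((sameCycle_iff_mem_cyc w x y).1 hy)
  · intro h y hy
    exact h y ((sameCycle_iff_mem_cyc w x y).2 hy)

end Count

/-- For every permutation `w ∈ S_n`, the number of cycles of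
`w` equals the number of left-to-right maxima (records) of `F(w)`, where `F`
is the Rényi–Foata map. -/
theorem numCycles_eq_records_foata (n : ℕ) (w : Equiv.Perm (Fin n)) :
    numCycles w = recordCount (wordN w) := by
  classical
  have key : ∀ (ls : List (Fin n)), (∀ x ∈ ls, ∀ y ∈ cyc w x, y ≤ x) →
      ls.Pairwise (· < ·) →
      recordCount ((ls.flatMap (cyc w)).map Fin.val) = ls.length := by
    intro ls hls hpw
    have hmap : (ls.flatMap (cyc w)).map Fin.val
        = (ls.map (fun x => (cyc w x).map Fin.val)).flatten := by
      rw [List.map_flatMap, List.flatMap_def]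
    have hmax : ∀ B ∈ ls.map (fun x => (cyc w x).map Fin.val),
        ∀ t ∈ B.tail, t < B.headI := by
      intro B hB
      rw [List.mem_map] at hB
      obtain ⟨x, hx, rfl⟩ := hB
      obtain ⟨t, hct⟩ := cyc_cons w x
      rw [hct]
      intro v hv
      simp only [List.map_cons, List.tail_cons, List.headI] at hv ⊢
      rw [List.mem_map] at hv
      obtain ⟨y, hy, rfl⟩ := hv
      have hyx : y ≤ x := hls x hx y (by rw [hct]; exact List.mem_cons_of_mem _ hy)
      have hne : y ≠ x := by
        have hnd := cyc_nodup w x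
        rw [hct, List.nodup_cons] at hnd
        rintro rfl; exact hnd.1 hy
      exact Fin.lt_iff_val_lt_val.1 (lt_of_le_of_ne hyx hne)
    have hheads : (ls.map (fun x => (cyc w x).map Fin.val)).map List.headI
        = ls.map Fin.val := by
      rw [List.map_map]
      apply List.map_congr_left
      intro x _
      obtain ⟨t, hct⟩ := cyc_cons w x
      simp [hct]
    have hchain : ((ls.map (fun x => (cyc w x).map Fin.val)).map List.headI).Chain' (· < ·) := by
      rw [hheads]
      exact (List.pairwise_map.2 (hpw.imp (fun h => Fin.lt_iff_val_lt_val.1 h))).isChain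
    have hne : ∀ B ∈ ls.map (fun x => (cyc w x).map Fin.val), B ≠ [] := by
      intro B hB
      rw [List.mem_map] at hB
      obtain ⟨x, hx, rfl⟩ := hB
      obtain ⟨t, hct⟩ := cyc_cons w x
      simp [hct]
    rw [hmap, recordCount_flatten _ hmax hchain hne, List.length_map]
  rw [wordN, foataWord]
  rw [key _ ?lead ?pw]
  · exact (length_leaders w).symm
  case lead =>
    intro x hx
    rw [List.mem_filter] at hx
    exact of_decide_eq_true hx.2
  case pw =>
    exact (List.pairwise_lt_finRange n).filter _
end

section
/- Let φ = F ∘ I ∘ F^{-1} ∘ R : S_n → S_n, where F is the Rényi–Foata map, I is inversion, and R is reversal. Then for any permutation written in one-line notation as w = A n B (where A, B are the subwords before and after the maximal letter n), φ(AnB) = φ(B) n A, where φ is applied to the partial permutation B via the canonical order-isomorphism to a smaller symmetric group. -/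
/-- `IsPhi w w'` says that `w' = φ(w)` where `φ = F ∘ I ∘ F⁻¹ ∘ R`:
first reverse the one-line notation of `w`, then apply `F⁻¹` (giving the
unique `u` whose Foata word is that reversal), invert `u`, and apply `F`. -/
def IsPhi {n : ℕ} (w w' : Equiv.Perm (Fin n)) : Prop :=
  ∃ u : Equiv.Perm (Fin n),
    foataWord u = (oneLineF w).reverse ∧ oneLineF w' = foataWord u⁻¹

/-- `IsPhiBar w w'` says that `w' = φ̄(w)` where `φ̄ = I ∘ F⁻¹ ∘ R ∘ F`:
apply `F` to `w`, reverse the resulting word, apply `F⁻¹`, and invert. -/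
def IsPhiBar {n : ℕ} (w w' : Equiv.Perm (Fin n)) : Prop :=
  foataWord w'⁻¹ = (foataWord w).reverse

/-- `IsGamma w w'` says that `w' = γ(w)` where `γ = I ∘ F⁻¹ ∘ C ∘ F`:
apply `F` to `w`, complement each entry of the resulting word, apply `F⁻¹`,
and invert. -/
def IsGamma {n : ℕ} (w w' : Equiv.Perm (Fin n)) : Prop :=
  foataWord w'⁻¹ = (foataWord w).map Fin.rev

/-- Standardization of a word `L` with distinct entries: replace each entry by
its rank (number of entries of `L` smaller than it), giving the one-line word
of a permutation of `Fin L.length` via the canonical order-isomorphism. -/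
def stdz (L : List ℕ) : List ℕ :=
  L.map fun x => (L.filter fun y => decide (y < x)).length

/-- `IsPhiWord L L'` says that `L' = φ(L)` for partial permutations (words
with distinct entries), where `φ` is applied via the canonical
order-isomorphism with a permutation of `Fin L.length`. -/
def IsPhiWord (L L' : List ℕ) : Prop :=
  L'.Perm L ∧ ∃ u u' : Equiv.Perm (Fin L.length),
    oneLineN u = stdz L ∧ IsPhi u u' ∧ stdz L' = oneLineN u'

set_option linter.unusedSectionVars false

namespace Foata
open List


variable {α : Type*} [LinearOrder α]

def blocks : List α → List (List α)
  | [] => []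
  | a :: l =>
    (a :: l.takeWhile (fun x => decide (x < a))) :: blocks (l.dropWhile (fun x => decide (x < a)))
  termination_by l => l.length
  decreasing_by
    simp only [List.length_cons, Nat.lt_succ_iff]
    exact (List.dropWhile_sublist _).length_le

@[simp] lemma blocks_nil : blocks ([] : List α) = [] := by rw [blocks]

lemma blocks_cons (a : α) (l : List α) :
    blocks (a :: l) =
      (a :: l.takeWhile (fun x => decide (x < a))) ::
        blocks (l.dropWhile (fun x => decide (x < a))) := by rw [blocks]

/-- `x` is smaller than the head of `b` (vacuously true if `b = []`). -/
def ltHead (x : α) (b : List α) : Prop := ∀ a ∈ b.head?, x < a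

lemma ltHead_cons {x a : α} {t : List α} : ltHead x (a :: t) ↔ x < a := by
  simp [ltHead]

/-- canonical block decompositions -/
structure Canon (bs : List (List α)) : Prop where
  ne : ∀ b ∈ bs, b ≠ []
  tail_lt : ∀ b ∈ bs, ∀ x ∈ b.tail, ltHead x b
  cross : bs.Pairwise fun b b' => ∀ x ∈ b, ltHead x b'

lemma Canon.tail {b : List α} {bs : List (List α)} (h : Canon (b :: bs)) : Canon bs :=
  ⟨fun c hc => h.ne c (mem_cons_of_mem _ hc),
   fun c hc => h.tail_lt c (mem_cons_of_mem _ hc),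
   (pairwise_cons.1 h.cross).2⟩

lemma takeWhile_append_of {p : α → Bool} {l1 : List α} (l2 : List α)
    (h : ∀ x ∈ l1, p x = true) :
    (l1 ++ l2).takeWhile p = l1 ++ l2.takeWhile p := by
  induction l1 with
  | nil => simp
  | cons a l ih =>
    simp [takeWhile_cons, h a (mem_cons_self), ih fun x hx => h x (mem_cons_of_mem _ hx)]

lemma dropWhile_append_of {p : α → Bool} {l1 : List α} (l2 : List α)
    (h : ∀ x ∈ l1, p x = true) :
    (l1 ++ l2).dropWhile p = l2.dropWhile p := by
  induction l1 with
  | nil => simp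
  | cons a l ih =>
    simp only [cons_append, dropWhile_cons, h a (mem_cons_self)]
    exact ih fun x hx => h x (mem_cons_of_mem _ hx)

lemma flatten_blocks (L : List α) : (blocks L).flatten = L := by
  induction L using blocks.induct with
  | case1 => simp
  | case2 a l ih =>
    rw [blocks_cons]
    simp only [flatten_cons, ih]
    rw [cons_append, takeWhile_append_dropWhile]

lemma mem_of_mem_blocks {L : List α} {b : List α} {x : α} (hb : b ∈ blocks L) (hx : x ∈ b) :
    x ∈ L := by
  rw [← flatten_blocks L]
  exact mem_flatten.2 ⟨b, hb, hx⟩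

lemma canon_blocks {L : List α} (h : L.Nodup) : Canon (blocks L) := by
  induction L using blocks.induct with
  | case1 => exact ⟨by simp, by simp, by simp⟩
  | case2 a l ih =>
    have hnl : l.Nodup := (nodup_cons.1 h).2
    have hanl : a ∉ l := (nodup_cons.1 h).1
    have hnr : (l.dropWhile (fun x => decide (x < a))).Nodup :=
      (List.dropWhile_sublist _).nodup hnl
    have iht := ih hnr
    have ht_lt : ∀ x ∈ l.takeWhile (fun x => decide (x < a)), x < a := by
      intro x hx
      have := mem_takeWhile_imp hx
      simpa using this
    have hmem_r : ∀ x ∈ l.dropWhile (fun x => decide (x < a)), x ∈ l :=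
      fun x hx => (List.dropWhile_sublist _).mem hx
    have hhead : ∀ b ∈ blocks (l.dropWhile (fun x => decide (x < a))), ltHead a b := by
      cases hr : l.dropWhile (fun x => decide (x < a)) with
      | nil => simp
      | cons a0 l0 =>
        have ha0 : a < a0 := by
          have h1 := List.head?_dropWhile_not (fun x => decide (x < a)) l
          rw [hr] at h1
          simp only [head?_cons, decide_eq_false_iff_not, not_lt] at h1
          have h2 : a0 ≠ a := fun he => hanl (he ▸ hmem_r a0 (by rw [hr]; exact mem_cons_self))
          exact lt_of_le_of_ne h1 (Ne.symm h2)
        rw [blocks_cons]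
        intro b hb
        rcases mem_cons.1 hb with rfl | hb'
        · exact ltHead_cons.2 ha0
        · have hcross := iht.cross
          rw [hr, blocks_cons] at hcross
          have := (pairwise_cons.1 hcross).1 b hb' a0 (mem_cons_self)
          intro z hz
          exact lt_trans ha0 (this z hz)
    rw [blocks_cons]
    refine ⟨?_, ?_, ?_⟩
    · intro b hb
      rcases mem_cons.1 hb with rfl | hb'
      · simp
      · exact iht.ne b hb'
    · intro b hb
      rcases mem_cons.1 hb with rfl | hb'
      · intro x hx
        simp only [List.tail_cons] at hx
        exact ltHead_cons.2 (ht_lt x hx)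
      · exact iht.tail_lt b hb'
    · rw [pairwise_cons]
      refine ⟨?_, iht.cross⟩
      intro b hb x hx
      have hxa : x ≤ a := by
        rcases mem_cons.1 hx with rfl | hx'
        · exact le_refl x
        · exact le_of_lt (ht_lt x hx')
      intro z hz
      exact lt_of_le_of_lt hxa (hhead b hb z hz)

lemma blocks_flatten {bs : List (List α)} (h : Canon bs) : blocks bs.flatten = bs := by
  induction bs with
  | nil => simp
  | cons b rest ih =>
    obtain ⟨a, t, rfl⟩ : ∃ a t, b = a :: t := by
      rcases b with _ | ⟨a, t⟩
      · exact absurd rfl (h.ne [] (mem_cons_self))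
      · exact ⟨a, t, rfl⟩
    have ht_lt : ∀ x ∈ t, decide (x < a) = true := by
      intro x hx
      have := h.tail_lt _ (mem_cons_self) x (by simpa using hx)
      simpa using ltHead_cons.1 this
    have hrest_head : rest.flatten.takeWhile (fun x => decide (x < a)) = [] ∧
        rest.flatten.dropWhile (fun x => decide (x < a)) = rest.flatten := by
      cases hr : rest with
      | nil => simp
      | cons b1 rest' =>
        obtain ⟨a1, t1, rfl⟩ : ∃ a1 t1, b1 = a1 :: t1 := by
          rcases b1 with _ | ⟨a1, t1⟩
          · exact absurd rfl (h.ne [] (by simp [hr]))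
          · exact ⟨a1, t1, rfl⟩
        have haa1 : a < a1 := by
          have := (pairwise_cons.1 h.cross).1 (a1 :: t1) (by simp [hr]) a (mem_cons_self)
          exact ltHead_cons.1 this
        simp only [flatten_cons, cons_append, takeWhile_cons, dropWhile_cons]
        have : ¬ (a1 < a) := not_lt_of_gt haa1
        simp [this]
    rw [flatten_cons, cons_append, blocks_cons,
      takeWhile_append_of _ ht_lt, dropWhile_append_of _ ht_lt,
      hrest_head.1, hrest_head.2, append_nil, ih h.tail]



variable {α : Type*} [DecidableEq α]

def ddp (acc l : List α) : List α :=
  l.foldl (fun acc x => if x ∈ acc then acc else acc ++ [x]) acc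

lemma ddp_nil (acc : List α) : ddp acc [] = acc := rfl

lemma ddp_cons (acc : List α) (a : α) (l : List α) :
    ddp acc (a :: l) = ddp (if a ∈ acc then acc else acc ++ [a]) l := rfl

lemma ddp_append (acc l1 l2 : List α) : ddp acc (l1 ++ l2) = ddp (ddp acc l1) l2 := by
  simp [ddp, List.foldl_append]

lemma ddp_of_mem {acc l : List α} (h : ∀ x ∈ l, x ∈ acc) : ddp acc l = acc := by
  induction l generalizing acc with
  | nil => rfl
  | cons a l ih =>
    rw [ddp_cons, if_pos (h a (mem_cons_self))]
    exact ih fun x hx => h x (mem_cons_of_mem _ hx)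

lemma ddp_fresh {acc l : List α} (hl : l.Nodup) (h : ∀ x ∈ l, x ∉ acc) :
    ddp acc l = acc ++ l := by
  induction l generalizing acc with
  | nil => simp [ddp_nil]
  | cons a l ih =>
    rw [ddp_cons, if_neg (h a (mem_cons_self))]
    rw [ih (nodup_cons.1 hl).2]
    · simp
    · intro x hx
      simp only [mem_append, mem_singleton]
      rintro (hx' | rfl)
      · exact h x (mem_cons_of_mem _ hx) hx'
      · exact (nodup_cons.1 hl).1 hx

variable {n : ℕ}

lemma cyc_eq_ddp (u : Equiv.Perm (Fin n)) (x : Fin n) :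
    cyc u x = ddp [] ((List.range n).map fun k => (u ^ k) x) := by
  rw [cyc, ddp, List.foldl_map]

lemma pow_eq_iterate (u : Equiv.Perm (Fin n)) (k : ℕ) (x : Fin n) :
    (u ^ k) x = (⇑u)^[k] x := by rw [Equiv.Perm.iterate_eq_pow]

lemma per_pos (u : Equiv.Perm (Fin n)) (x : Fin n) : 0 < Function.minimalPeriod (⇑u) x := by
  apply Function.IsPeriodicPt.minimalPeriod_pos (orderOf_pos u)
  show (⇑u)^[orderOf u] x = x
  rw [Equiv.Perm.iterate_eq_pow, pow_orderOf_eq_one]; rfl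

lemma pow_mod_period (u : Equiv.Perm (Fin n)) (x : Fin n) (k : ℕ) :
    (u ^ (k % Function.minimalPeriod (⇑u) x)) x = (u ^ k) x := by
  rw [pow_eq_iterate, pow_eq_iterate, Function.iterate_mod_minimalPeriod_eq]

lemma cyc_spec (u : Equiv.Perm (Fin n)) (x : Fin n) :
    cyc u x = (List.range (Function.minimalPeriod (⇑u) x)).map fun k => (u ^ k) x := by
  set c := Function.minimalPeriod (⇑u) x with hc
  have hc1 : 0 < c := per_pos u x
  have hinj : ∀ k ∈ List.range c, ∀ k' ∈ List.range c, (u ^ k) x = (u ^ k') x → k = k' := by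
    intro k hk k' hk' he
    rw [pow_eq_iterate, pow_eq_iterate] at he
    exact Function.iterate_injOn_Iio_minimalPeriod (List.mem_range.1 hk) (List.mem_range.1 hk') he
  have hnd : ((List.range c).map fun k => (u ^ k) x).Nodup :=
    (List.nodup_range (n := c)).map_on (fun k hk k' hk' h => hinj k hk k' hk' h)
  have hcn : c ≤ n := by
    have := hnd.length_le_card
    simpa using this
  obtain ⟨d, hd⟩ : ∃ d, n = c + d := ⟨n - c, (Nat.add_sub_cancel' hcn).symm⟩
  rw [cyc_eq_ddp]
  rw [show (List.range n) = List.range c ++ (List.range d).map (fun k => c + k) by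
    rw [hd, List.range_add]]
  rw [List.map_append, ddp_append, ddp_fresh hnd (by simp), List.nil_append]
  apply ddp_of_mem
  intro y hy
  rw [List.map_map] at hy
  simp only [List.mem_map, List.mem_range, Function.comp] at hy
  obtain ⟨k, -, rfl⟩ := hy
  simp only [List.mem_map, List.mem_range]
  exact ⟨(c + k) % c, Nat.mod_lt _ hc1, pow_mod_period u x (c + k)⟩

lemma cyc_length (u : Equiv.Perm (Fin n)) (x : Fin n) :
    (cyc u x).length = Function.minimalPeriod (⇑u) x := by simp [cyc_spec]

lemma cyc_nodup (u : Equiv.Perm (Fin n)) (x : Fin n) : (cyc u x).Nodup := by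
  rw [cyc_spec]
  apply (List.nodup_range).map_on
  intro k hk k' hk' he
  rw [pow_eq_iterate, pow_eq_iterate] at he
  exact Function.iterate_injOn_Iio_minimalPeriod (List.mem_range.1 hk) (List.mem_range.1 hk') he

lemma cyc_getElem (u : Equiv.Perm (Fin n)) (x : Fin n) (j : ℕ) (hj : j < (cyc u x).length) :
    (cyc u x)[j] = (u ^ j) x := by
  simp [cyc_spec] at hj ⊢

lemma mem_cyc {u : Equiv.Perm (Fin n)} {x y : Fin n} :
    y ∈ cyc u x ↔ ∃ k : ℕ, (u ^ k) x = y := by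
  rw [cyc_spec]
  simp only [List.mem_map, List.mem_range]
  constructor
  · rintro ⟨k, -, rfl⟩; exact ⟨k, rfl⟩
  · rintro ⟨k, rfl⟩
    exact ⟨k % _, Nat.mod_lt _ (per_pos u x), pow_mod_period u x k⟩

lemma mem_cyc_self (u : Equiv.Perm (Fin n)) (x : Fin n) : x ∈ cyc u x :=
  mem_cyc.2 ⟨0, rfl⟩

lemma cyc_eq_cons (u : Equiv.Perm (Fin n)) (x : Fin n) :
    ∃ t, cyc u x = x :: t := by
  obtain ⟨c', hc'⟩ : ∃ c', Function.minimalPeriod (⇑u) x = c' + 1 :=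
    ⟨_ - 1, (Nat.succ_pred_eq_of_pos (per_pos u x)).symm⟩
  refine ⟨((List.range c').map fun k => (u ^ (k + 1)) x), ?_⟩
  rw [cyc_spec, hc', List.range_succ_eq_map, List.map_cons, List.map_map]
  simp [Function.comp_def, Nat.succ_eq_add_one, Nat.add_comm]

lemma cyc_congr {u : Equiv.Perm (Fin n)} {x y : Fin n} (h : y ∈ cyc u x) :
    ∀ z, z ∈ cyc u y ↔ z ∈ cyc u x := by
  obtain ⟨k, rfl⟩ := mem_cyc.1 h
  intro z
  rw [mem_cyc, mem_cyc]
  constructor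
  · rintro ⟨j, rfl⟩; exact ⟨j + k, by rw [pow_add]; rfl⟩
  · rintro ⟨j, rfl⟩
    set o := orderOf u with ho
    have ho1 : 0 < o := orderOf_pos u
    have hk : k ≤ o * (k + 1) := by nlinarith
    refine ⟨j + o * (k + 1) - k, ?_⟩
    have h1 : (u ^ (j + o * (k + 1) - k)) ((u ^ k) x) = (u ^ (j + o * (k + 1))) x := by
      rw [← Equiv.Perm.mul_apply, ← pow_add, Nat.sub_add_cancel (hk.trans (Nat.le_add_left _ _))]
    have h2 : u ^ (j + o * (k + 1)) = u ^ j := by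
      rw [pow_add, pow_mul, pow_orderOf_eq_one, one_pow, mul_one]
    rw [h1, h2]
  

section WordPerm
variable {α : Type*} [DecidableEq α]

lemma prod_formPerm_fixed (bs : List (List α)) (x : α) (h : ∀ b ∈ bs, x ∉ b) :
    (bs.map List.formPerm).prod x = x := by
  induction bs with
  | nil => rfl
  | cons c rest ih =>
    simp only [map_cons, prod_cons, Equiv.Perm.mul_apply]
    rw [ih fun b hb => h b (mem_cons_of_mem _ hb)]
    exact formPerm_apply_of_notMem (h c (mem_cons_self))

lemma prod_formPerm_apply {bs : List (List α)} (hd : bs.Pairwise List.Disjoint)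
    {b : List α} {x : α} (hb : b ∈ bs) (hx : x ∈ b) :
    (bs.map List.formPerm).prod x = b.formPerm x := by
  induction bs with
  | nil => cases hb
  | cons c rest ih =>
    simp only [map_cons, prod_cons, Equiv.Perm.mul_apply]
    rcases mem_cons.1 hb with rfl | hb'
    · rw [prod_formPerm_fixed]
      intro r hr
      exact fun hxr => (pairwise_cons.1 hd).1 r hr hx hxr
    · rw [ih (pairwise_cons.1 hd).2 hb']
      have hmem : b.formPerm x ∈ b := formPerm_apply_mem_of_mem hx
      exact formPerm_apply_of_notMem fun hc => (pairwise_cons.1 hd).1 b hb' hc hmem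

lemma formPerm_pow_mem {b : List α} {x : α} (hx : x ∈ b) (k : ℕ) :
    (b.formPerm ^ k) x ∈ b := by
  induction k with
  | zero => simpa
  | succ k ih =>
    rw [pow_succ', Equiv.Perm.mul_apply]
    exact formPerm_apply_mem_of_mem ih

end WordPerm

variable {n : ℕ}

def wordPerm (L : List (Fin n)) : Equiv.Perm (Fin n) :=
  ((blocks L).map List.formPerm).prod

lemma blocks_nodup_disjoint {L : List (Fin n)} (hL : L.Nodup) :
    (∀ b ∈ blocks L, b.Nodup) ∧ (blocks L).Pairwise List.Disjoint := by
  have := flatten_blocks L ▸ hL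
  exact List.nodup_flatten.1 this

lemma wordPerm_apply {L : List (Fin n)} (hL : L.Nodup) {b : List (Fin n)} {x : Fin n}
    (hb : b ∈ blocks L) (hx : x ∈ b) :
    wordPerm L x = b.formPerm x :=
  prod_formPerm_apply (blocks_nodup_disjoint hL).2 hb hx

lemma wordPerm_pow {L : List (Fin n)} (hL : L.Nodup) {b : List (Fin n)} {x : Fin n}
    (hb : b ∈ blocks L) (hx : x ∈ b) (k : ℕ) :
    (wordPerm L ^ k) x = (b.formPerm ^ k) x := by
  induction k with
  | zero => rfl
  | succ k ih =>
    rw [pow_succ', pow_succ', Equiv.Perm.mul_apply, Equiv.Perm.mul_apply, ih]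
    exact wordPerm_apply hL hb (formPerm_pow_mem hx k)

lemma cyc_wordPerm {L : List (Fin n)} (hL : L.Nodup) {b : List (Fin n)}
    (hb : b ∈ blocks L) (j : ℕ) (hj : j < b.length) :
    cyc (wordPerm L) b[j] = b.rotate j := by
  have hbnd : b.Nodup := (blocks_nodup_disjoint hL).1 b hb
  have hxb : b[j] ∈ b := List.getElem_mem hj
  have hlen0 : 0 < b.length := lt_of_le_of_lt (Nat.zero_le j) hj
  have hpow : ∀ k : ℕ, (wordPerm L ^ k) b[j] =
      b[(j + k) % b.length]'(Nat.mod_lt _ hlen0) := by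
    intro k
    rw [wordPerm_pow hL hb hxb k]
    exact formPerm_pow_apply_getElem b hbnd k j hj
  have hper : Function.IsPeriodicPt (⇑(wordPerm L)) b.length b[j] := by
    show (⇑(wordPerm L))^[b.length] b[j] = b[j]
    rw [Equiv.Perm.iterate_eq_pow]
    have := hpow b.length
    simp only [Nat.add_mod_right, Nat.mod_eq_of_lt hj] at this
    exact this
  have hc : Function.minimalPeriod (⇑(wordPerm L)) b[j] = b.length := by
    have hle := Function.IsPeriodicPt.minimalPeriod_le hlen0 hper
    rcases lt_or_eq_of_le hle with hlt | he
    · exfalso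
      have hc1 : 0 < Function.minimalPeriod (⇑(wordPerm L)) b[j] := per_pos _ _
      have hfix : (wordPerm L ^ Function.minimalPeriod (⇑(wordPerm L)) b[j]) b[j] = b[j] := by
        rw [pow_eq_iterate]
        exact Function.iterate_minimalPeriod
      rw [hpow _] at hfix
      have hidx : (j + Function.minimalPeriod (⇑(wordPerm L)) b[j]) % b.length = j :=
        (List.Nodup.getElem_inj_iff hbnd).1 hfix
      have h2 : (j + Function.minimalPeriod (⇑(wordPerm L)) b[j]) ≡ j [MOD b.length] := by
        unfold Nat.ModEq
        rw [hidx, Nat.mod_eq_of_lt hj]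
      have hdvd := (Nat.modEq_iff_dvd' (Nat.le_add_right j _)).1 h2.symm
      simp only [Nat.add_sub_cancel_left] at hdvd
      exact absurd (Nat.le_of_dvd hc1 hdvd) (not_le_of_gt hlt)
    · exact he
  rw [cyc_spec, hc]
  apply List.ext_getElem
  · simp
  · intro i h1 h2
    simp only [List.getElem_map, List.getElem_range]
    rw [hpow i, List.getElem_rotate]
    congr 1
    rw [Nat.add_comm]

lemma cyc_wordPerm_head {L : List (Fin n)} (hL : L.Nodup) {a : Fin n} {t : List (Fin n)}
    (hb : a :: t ∈ blocks L) : cyc (wordPerm L) a = a :: t := by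
  have := cyc_wordPerm hL hb 0 (by simp)
  simpa using this

lemma pred_iff_head {L : List (Fin n)} (hnd : L.Nodup) (hmemL : ∀ x : Fin n, x ∈ L)
    (x : Fin n) :
    (∀ y ∈ cyc (wordPerm L) x, y ≤ x) ↔ ∃ t, x :: t ∈ blocks L := by
  have hcanon := canon_blocks hnd
  have hxflat : x ∈ (blocks L).flatten := by rw [flatten_blocks]; exact hmemL x
  obtain ⟨b, hb, hxb⟩ := mem_flatten.1 hxflat
  obtain ⟨a, t, rfl⟩ : ∃ a t, b = a :: t := by
    rcases b with _ | ⟨a, t⟩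
    · exact absurd rfl (hcanon.ne [] hb)
    · exact ⟨a, t, rfl⟩
  constructor
  · intro hmax
    obtain ⟨j, hj, hbj⟩ := List.getElem_of_mem hxb
    have hcyc : cyc (wordPerm L) x = (a :: t).rotate j := by
      rw [← hbj]; exact cyc_wordPerm hnd hb j hj
    have hax : a ≤ x := by
      apply hmax; rw [hcyc, List.mem_rotate]; exact mem_cons_self
    have hxa : x = a := by
      rcases mem_cons.1 hxb with h | hx'
      · exact h
      · exact absurd hax (not_le_of_gt
          (ltHead_cons.1 (hcanon.tail_lt _ hb x (by simpa using hx'))))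
    subst hxa
    exact ⟨t, hb⟩
  · rintro ⟨t', hbt'⟩
    have hcyc := cyc_wordPerm_head hnd hbt'
    intro y hy
    rw [hcyc] at hy
    rcases mem_cons.1 hy with rfl | hy'
    · exact le_refl y
    · exact le_of_lt (ltHead_cons.1 (hcanon.tail_lt _ hbt' y (by simpa using hy')))

lemma foataWord_wordPerm {L : List (Fin n)} (hL : L.Perm (List.finRange n)) :
    foataWord (wordPerm L) = L := by
  have hnd : L.Nodup := hL.nodup_iff.2 (List.nodup_finRange n)
  have hcanon := canon_blocks hnd
  have hmemL : ∀ x : Fin n, x ∈ L := fun x => hL.mem_iff.2 (List.mem_finRange x)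
  set H := (blocks L).filterMap List.head? with hH
  have hmemH : ∀ x : Fin n, x ∈ H ↔ ∃ t, x :: t ∈ blocks L := by
    intro x
    rw [hH, List.mem_filterMap]
    constructor
    · rintro ⟨b, hb, hhead⟩
      obtain ⟨a, t, rfl⟩ : ∃ a t, b = a :: t := by
        rcases b with _ | ⟨a, t⟩
        · exact absurd rfl (hcanon.ne [] hb)
        · exact ⟨a, t, rfl⟩
      simp only [head?_cons, Option.some.injEq] at hhead
      subst hhead
      exact ⟨t, hb⟩
    · rintro ⟨t, ht⟩
      exact ⟨x :: t, ht, rfl⟩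
  have hsorH : H.Pairwise (fun x y => x < y) := by
    refine List.pairwise_filterMap.2 (hcanon.cross.imp ?_)
    intro b b' h z hz z' hz'
    exact h z (List.mem_of_mem_head? hz) z' hz'
  have hfilter : (List.finRange n).filter (fun x => decide (∀ y ∈ cyc (wordPerm L) x, y ≤ x)) = H := by
    haveI : IsAntisymm (Fin n) (fun x y : Fin n => x < y) := ⟨fun a b h h' => absurd h' (lt_asymm h)⟩
    apply (fun h1 h2 h3 => List.Perm.eq_of_pairwise (le := fun x y : Fin n => x < y) (fun a b _ _ h h' => absurd h' (lt_asymm h)) h2 h3 h1)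
    · rw [List.perm_ext_iff_of_nodup]
      · intro x
        rw [List.mem_filter, hmemH]
        simp only [List.mem_finRange, true_and, decide_eq_true_eq]
        exact pred_iff_head hnd hmemL x
      · exact ((List.pairwise_lt_finRange n).filter _).imp ne_of_lt
      · exact hsorH.imp ne_of_lt
    · exact (List.pairwise_lt_finRange n).filter _
    · exact hsorH
  rw [foataWord, hfilter]
  -- H.flatMap (cyc (wordPerm L)) = L
  rw [List.flatMap_def]
  have : H.map (cyc (wordPerm L)) = blocks L := by
    rw [hH]
    have : ∀ bs : List (List (Fin n)), (∀ b ∈ bs, b ∈ blocks L) →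
        (bs.filterMap List.head?).map (cyc (wordPerm L)) = bs := by
      intro bs
      induction bs with
      | nil => intro _; rfl
      | cons b rest ih =>
        intro hsub
        obtain ⟨a, t, rfl⟩ : ∃ a t, b = a :: t := by
          rcases b with _ | ⟨a, t⟩
          · exact absurd rfl (hcanon.ne [] (hsub [] (mem_cons_self)))
          · exact ⟨a, t, rfl⟩
        simp only [List.filterMap_cons, head?_cons, List.map_cons]
        rw [cyc_wordPerm_head hnd (hsub _ (mem_cons_self))]
        rw [ih fun b hb => hsub b (mem_cons_of_mem _ hb)]
    exact this (blocks L) (fun b hb => hb)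
  rw [this, flatten_blocks]

section Rev1
variable {α : Type*}

def rev1 : List α → List α
  | [] => []
  | a :: t => a :: t.reverse

@[simp] lemma rev1_nil : rev1 ([] : List α) = [] := rfl
@[simp] lemma rev1_cons (a : α) (t : List α) : rev1 (a :: t) = a :: t.reverse := rfl

lemma rev1_perm (b : List α) : rev1 b ~ b := by
  cases b with
  | nil => rfl
  | cons a t => exact (t.reverse_perm).cons a

lemma mem_rev1 {b : List α} {x : α} : x ∈ rev1 b ↔ x ∈ b := (rev1_perm b).mem_iff

lemma head?_rev1 (b : List α) : (rev1 b).head? = b.head? := by cases b <;> rfl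

lemma flatten_map_rev1_perm (bs : List (List α)) : (bs.map rev1).flatten ~ bs.flatten := by
  induction bs with
  | nil => rfl
  | cons b rest ih =>
    simp only [List.map_cons, List.flatten_cons]
    exact (rev1_perm b).append ih

lemma rev1_map {β : Type*} (f : α → β) (b : List α) : rev1 (b.map f) = (rev1 b).map f := by
  cases b <;> simp

end Rev1

section Rev1Ord
variable {α : Type*} [LinearOrder α]

lemma canon_map_rev1 {bs : List (List α)} (h : Canon bs) : Canon (bs.map rev1) := by
  refine ⟨?_, ?_, ?_⟩
  · intro b hb
    obtain ⟨c, hc, rfl⟩ := List.mem_map.1 hb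
    cases c with
    | nil => exact absurd rfl (h.ne [] hc)
    | cons a t => simp
  · intro b hb x hx
    obtain ⟨c, hc, rfl⟩ := List.mem_map.1 hb
    cases c with
    | nil => exact absurd rfl (h.ne [] hc)
    | cons a t =>
      simp only [rev1_cons, List.tail_cons, List.mem_reverse] at hx
      have := h.tail_lt _ hc x (by simpa using hx)
      simpa [ltHead] using (ltHead_cons.1 this)
  · rw [List.pairwise_map]
    refine h.cross.imp ?_
    intro b b' hbb' x hx
    intro a ha
    rw [head?_rev1] at ha
    exact hbb' x (mem_rev1.1 hx) a ha

end Rev1Ord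

lemma formPerm_rev1 {α : Type*} [DecidableEq α] {b : List α} (h : b.Nodup) :
    (rev1 b).formPerm = b.formPerm⁻¹ := by
  cases b with
  | nil => simp [List.formPerm_nil]
  | cons a t =>
    have hnd : (a :: t.reverse).Nodup := by
      rw [List.nodup_cons] at h ⊢
      exact ⟨by simpa using h.1, List.nodup_reverse.2 h.2⟩
    rw [rev1_cons, ← List.formPerm_reverse]
    have : (a :: t).reverse = (a :: t.reverse).rotate 1 := by
      rw [List.rotate_cons_succ, List.rotate_zero, List.reverse_cons]
    rw [this, List.formPerm_rotate_one _ hnd]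

lemma foataWord_wordPerm_inv {L : List (Fin n)} (hL : L.Perm (List.finRange n)) :
    foataWord (wordPerm L)⁻¹ = ((blocks L).map rev1).flatten := by
  have hnd : L.Nodup := hL.nodup_iff.2 (List.nodup_finRange n)
  have hcanon := canon_blocks hnd
  have hperm' : ((blocks L).map rev1).flatten ~ L := by
    refine (flatten_map_rev1_perm _).trans ?_
    rw [flatten_blocks]
  have hLfin' : ((blocks L).map rev1).flatten ~ List.finRange n := hperm'.trans hL
  have hnd' : ((blocks L).map rev1).flatten.Nodup := hLfin'.nodup_iff.2 (List.nodup_finRange n)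
  have hblocks' : blocks ((blocks L).map rev1).flatten = (blocks L).map rev1 :=
    blocks_flatten (canon_map_rev1 hcanon)
  have hinv : wordPerm ((blocks L).map rev1).flatten = (wordPerm L)⁻¹ := by
    have hmul : wordPerm L * wordPerm ((blocks L).map rev1).flatten = 1 := by
      apply Equiv.ext
      intro x
      have hx : x ∈ ((blocks L).map rev1).flatten := hLfin'.mem_iff.2 (List.mem_finRange x)
      have hx2 : x ∈ (blocks ((blocks L).map rev1).flatten).flatten := by
        rw [flatten_blocks]; exact hx
      obtain ⟨b', hb', hxb'⟩ := List.mem_flatten.1 hx2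
      rw [hblocks'] at hb'
      obtain ⟨b, hb, rfl⟩ := List.mem_map.1 hb'
      have hbnd : b.Nodup := (blocks_nodup_disjoint hnd).1 b hb
      have h1 : wordPerm ((blocks L).map rev1).flatten x = (rev1 b).formPerm x :=
        wordPerm_apply hnd' (by rw [hblocks']; exact List.mem_map_of_mem hb) hxb'
      rw [Equiv.Perm.mul_apply, h1, formPerm_rev1 hbnd]
      have h2 : b.formPerm⁻¹ x ∈ b := by
        apply List.mem_of_formPerm_apply_mem
        rw [Equiv.Perm.inv_def, Equiv.apply_symm_apply]
        exact mem_rev1.1 hxb'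
      rw [wordPerm_apply hnd hb h2, Equiv.Perm.inv_def, Equiv.apply_symm_apply]
      rfl
    exact (inv_eq_of_mul_eq_one_right hmul).symm
  rw [← hinv, foataWord_wordPerm hLfin']

section Unique
variable (u : Equiv.Perm (Fin n))

def Mx : List (Fin n) := (List.finRange n).filter (fun x => decide (∀ y ∈ cyc u x, y ≤ x))

lemma mem_Mx {x : Fin n} : x ∈ Mx u ↔ ∀ y ∈ cyc u x, y ≤ x := by
  simp [Mx, List.mem_filter]

lemma Mx_sorted : (Mx u).Pairwise (fun a b => a < b) := (List.pairwise_lt_finRange n).filter _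

lemma foataWord_eq_flatten : foataWord u = ((Mx u).map (cyc u)).flatten := by
  rw [foataWord, List.flatMap_def]; rfl

lemma exists_mem_Mx (x : Fin n) : ∃ m ∈ Mx u, x ∈ cyc u m := by
  classical
  have hSx : x ∈ cyc u x := mem_cyc_self u x
  have hfin : (cyc u x).toFinset.Nonempty := ⟨x, by simpa using hSx⟩
  set m := (cyc u x).toFinset.max' hfin with hm
  have hmS : m ∈ cyc u x := by
    have := (cyc u x).toFinset.max'_mem hfin
    simpa using this
  have hmax : ∀ y ∈ cyc u x, y ≤ m := fun y hy =>
    (cyc u x).toFinset.le_max' y (by simpa using hy)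
  have hcong := cyc_congr hmS
  exact ⟨m, (mem_Mx u).2 fun y hy => hmax y ((hcong y).1 hy), (hcong x).2 hSx⟩

lemma canon_Mx : Canon ((Mx u).map (cyc u)) := by
  refine ⟨?_, ?_, ?_⟩
  · intro b hb
    obtain ⟨m, hm, rfl⟩ := List.mem_map.1 hb
    obtain ⟨t, ht⟩ := cyc_eq_cons u m
    rw [ht]; exact List.cons_ne_nil _ _
  · intro b hb x hx
    obtain ⟨m, hm, rfl⟩ := List.mem_map.1 hb
    obtain ⟨t, ht⟩ := cyc_eq_cons u m
    intro a ha
    rw [ht] at ha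
    simp only [List.head?_cons, Option.mem_def, Option.some.injEq] at ha
    subst ha
    have hxc : x ∈ cyc u m := by
      rw [ht]; exact List.mem_cons_of_mem _ (by rw [ht] at hx; simpa using hx)
    have hle : x ≤ m := (mem_Mx u).1 hm x hxc
    have hne : x ≠ m := by
      have hnd := cyc_nodup u m
      rw [ht, List.nodup_cons] at hnd
      rw [ht] at hx
      simp only [List.tail_cons] at hx
      exact fun he => hnd.1 (he ▸ hx)
    exact lt_of_le_of_ne hle hne
  · rw [List.pairwise_map]
    refine (Mx_sorted u).imp_of_mem ?_
    intro m m' hm hm' hlt x hx a ha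
    obtain ⟨t', ht'⟩ := cyc_eq_cons u m'
    rw [ht'] at ha
    simp only [List.head?_cons, Option.mem_def, Option.some.injEq] at ha
    subst ha
    exact lt_of_le_of_lt ((mem_Mx u).1 hm x hx) hlt

lemma nodup_foataWord : (foataWord u).Nodup := by
  rw [foataWord_eq_flatten]
  rw [List.nodup_flatten]
  constructor
  · intro b hb
    obtain ⟨m, hm, rfl⟩ := List.mem_map.1 hb
    exact cyc_nodup u m
  · rw [List.pairwise_map]
    refine (Mx_sorted u).imp_of_mem ?_
    intro m m' hm hm' hlt z hz hz'
    have h1 := cyc_congr hz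
    have h2 := cyc_congr hz'
    have hmm : m' ∈ cyc u m := (h1 m').1 ((h2 m').2 (mem_cyc_self u m'))
    have hle : m' ≤ m := (mem_Mx u).1 hm m' hmm
    exact absurd hlt (not_lt.2 hle)

lemma foataWord_perm_finRange : (foataWord u).Perm (List.finRange n) := by
  rw [List.perm_ext_iff_of_nodup (nodup_foataWord u) (List.nodup_finRange n)]
  intro x
  simp only [List.mem_finRange, iff_true]
  obtain ⟨m, hm, hx⟩ := exists_mem_Mx u x
  rw [foataWord_eq_flatten]
  exact List.mem_flatten.2 ⟨cyc u m, List.mem_map_of_mem hm, hx⟩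

lemma wordPerm_foataWord : wordPerm (foataWord u) = u := by
  have hnd := nodup_foataWord u
  have hblocks : blocks (foataWord u) = (Mx u).map (cyc u) := by
    rw [foataWord_eq_flatten]
    exact blocks_flatten (canon_Mx u)
  apply Equiv.ext
  intro x
  obtain ⟨m, hm, hx⟩ := exists_mem_Mx u x
  have hb : cyc u m ∈ blocks (foataWord u) := by
    rw [hblocks]; exact List.mem_map_of_mem hm
  obtain ⟨j, hj, hbj⟩ := List.getElem_of_mem hx
  have hlen : (cyc u m).length = Function.minimalPeriod (⇑u) m := cyc_length u m
  have hlen0 : 0 < (cyc u m).length := lt_of_le_of_lt (Nat.zero_le j) hj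
  have hj' : (j + 1) % (cyc u m).length < (cyc u m).length := Nat.mod_lt _ hlen0
  calc wordPerm (foataWord u) x
      = (cyc u m).formPerm (cyc u m)[j] := by rw [wordPerm_apply hnd hb hx, hbj]
    _ = (cyc u m)[(j + 1) % (cyc u m).length]'hj' := by
        have := formPerm_pow_apply_getElem (cyc u m) (cyc_nodup u m) 1 j hj
        simpa using this
    _ = (u ^ ((j + 1) % (cyc u m).length)) m := cyc_getElem u m _ hj'
    _ = (u ^ (j + 1)) m := by rw [hlen]; exact pow_mod_period u m (j + 1)
    _ = u ((u ^ j) m) := by rw [pow_succ', Equiv.Perm.mul_apply]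
    _ = u x := by rw [← cyc_getElem u m j hj, hbj]

lemma foataWord_inv :
    foataWord u⁻¹ = ((blocks (foataWord u)).map rev1).flatten := by
  have := foataWord_wordPerm_inv (L := foataWord u) (foataWord_perm_finRange u)
  rwa [wordPerm_foataWord u] at this

end Unique

section Maps
variable {α : Type*} {β : Type*} [LinearOrder α] [LinearOrder β]

lemma blocks_map (f : α → β) {L : List α} (hnd : L.Nodup)
    (hf : ∀ x ∈ L, ∀ y ∈ L, x < y → f x < f y) :
    blocks (L.map f) = (blocks L).map (List.map f) := by
  have hcanon := canon_blocks hnd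
  have hC : Canon ((blocks L).map (List.map f)) := by
    refine ⟨?_, ?_, ?_⟩
    · intro b hb
      obtain ⟨c, hc, rfl⟩ := List.mem_map.1 hb
      simpa using hcanon.ne c hc
    · intro b hb x hx
      obtain ⟨c, hc, rfl⟩ := List.mem_map.1 hb
      obtain ⟨a, t, rfl⟩ : ∃ a t, c = a :: t := by
        rcases c with _ | ⟨a, t⟩
        · exact absurd rfl (hcanon.ne [] hc)
        · exact ⟨a, t, rfl⟩
      simp only [List.map_cons, List.tail_cons, List.mem_map] at hx
      obtain ⟨y, hy, rfl⟩ := hx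
      intro a' ha'
      simp only [List.map_cons, List.head?_cons, Option.mem_def, Option.some.injEq] at ha'
      subst ha'
      have hya : y < a := ltHead_cons.1 (hcanon.tail_lt _ hc y (by simpa using hy))
      exact hf y (mem_of_mem_blocks hc (List.mem_cons_of_mem _ hy)) a
        (mem_of_mem_blocks hc (List.mem_cons_self)) hya
    · rw [List.pairwise_map]
      refine hcanon.cross.imp_of_mem ?_
      intro c c' hcm hcm' h x hx a ha
      obtain ⟨y, hy, rfl⟩ := List.mem_map.1 hx
      obtain ⟨a0, t0, rfl⟩ : ∃ a0 t0, c' = a0 :: t0 := by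
        rcases c' with _ | ⟨a0, t0⟩
        · exact absurd rfl (hcanon.ne [] hcm')
        · exact ⟨a0, t0, rfl⟩
      simp only [List.map_cons, List.head?_cons, Option.mem_def, Option.some.injEq] at ha
      subst ha
      have hya0 : y < a0 := ltHead_cons.1 (h y hy)
      exact hf y (mem_of_mem_blocks hcm hy) a0
        (mem_of_mem_blocks hcm' (List.mem_cons_self)) hya0
  have hflat : ((blocks L).map (List.map f)).flatten = L.map f := by
    rw [← List.map_flatten, flatten_blocks]
  rw [← hflat, blocks_flatten hC]

lemma blocks_append_top {X Y : List α} {c : α}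
    (hX : X.Nodup) (hXc : ∀ x ∈ X, x < c) (hYc : ∀ y ∈ Y, y < c) :
    blocks (X ++ c :: Y) = blocks X ++ [c :: Y] := by
  have hcanonX := canon_blocks hX
  have hC : Canon (blocks X ++ [c :: Y]) := by
    refine ⟨?_, ?_, ?_⟩
    · intro b hb
      rcases List.mem_append.1 hb with hb' | hb'
      · exact hcanonX.ne b hb'
      · simp only [List.mem_singleton] at hb'
        subst hb'
        exact List.cons_ne_nil _ _
    · intro b hb x hx
      rcases List.mem_append.1 hb with hb' | hb'
      · exact hcanonX.tail_lt b hb' x hx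
      · simp only [List.mem_singleton] at hb'
        subst hb'
        simp only [List.tail_cons] at hx
        intro a ha
        simp only [List.head?_cons, Option.mem_def, Option.some.injEq] at ha
        subst ha
        exact hYc x hx
    · rw [List.pairwise_append]
      refine ⟨hcanonX.cross, List.pairwise_singleton _ _, ?_⟩
      intro b hb b' hb' x hx
      simp only [List.mem_singleton] at hb'
      subst hb'
      intro a ha
      simp only [List.head?_cons, Option.mem_def, Option.some.injEq] at ha
      subst ha
      exact hXc x (mem_of_mem_blocks hb hx)
  have hflat : (blocks X ++ [c :: Y]).flatten = X ++ c :: Y := by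
    rw [List.flatten_append, flatten_blocks]
    simp
  rw [← hflat, blocks_flatten hC]

end Maps

lemma countP_lt {α : Type*} {p q : α → Bool} {l : List α}
    (himp : ∀ a ∈ l, p a = true → q a = true)
    {a : α} (ha : a ∈ l) (hq : q a = true) (hp : p a = false) :
    l.countP p < l.countP q := by
  induction l with
  | nil => cases ha
  | cons b l ih =>
    rw [List.countP_cons, List.countP_cons]
    rcases List.mem_cons.1 ha with rfl | ha'
    · have hcle : l.countP p ≤ l.countP q :=
        List.countP_mono_left fun x hx h => himp x (List.mem_cons_of_mem _ hx) h
      rw [hp, hq]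
      simp only [if_true]
      have h0 : (if (false : Bool) = true then 1 else 0) = 0 := rfl
      omega
    · have hih := ih (fun x hx h => himp x (List.mem_cons_of_mem _ hx) h) ha'
      have hbl : (if p b = true then 1 else 0) ≤ (if q b = true then 1 else 0) := by
        by_cases hb : p b = true
        · rw [if_pos hb, if_pos (himp b (List.mem_cons_self) hb)]
        · rw [if_neg hb]
          omega
      omega

lemma map_cancel {α β : Type*} {f : α → β} (S : List α) :
    ∀ {l1 l2 : List α}, (∀ x ∈ l1, x ∈ S) → (∀ x ∈ l2, x ∈ S) →
    (∀ x ∈ S, ∀ y ∈ S, f x = f y → x = y) → l1.map f = l2.map f → l1 = l2 := by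
  intro l1
  induction l1 with
  | nil =>
    intro l2 _ _ _ h
    cases l2 with
    | nil => rfl
    | cons b l2 => simp at h
  | cons a l1 ih =>
    intro l2 h1 h2 hinj h
    cases l2 with
    | nil => simp at h
    | cons b l2 =>
      simp only [List.map_cons, List.cons.injEq] at h
      have hab : a = b := hinj a (h1 a (List.mem_cons_self)) b (h2 b (List.mem_cons_self)) h.1
      rw [hab, ih (fun x hx => h1 x (List.mem_cons_of_mem _ hx))
        (fun x hx => h2 x (List.mem_cons_of_mem _ hx)) hinj h.2]

lemma oneLineN_eq {n : ℕ} (w : Equiv.Perm (Fin n)) :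
    oneLineN w = (oneLineF w).map Fin.val := by
  simp [oneLineN, oneLineF, List.map_map, Function.comp_def]

lemma oneLineF_nodup {n : ℕ} (w : Equiv.Perm (Fin n)) : (oneLineF w).Nodup :=
  (List.nodup_finRange n).map w.injective

lemma oneLineF_perm {n : ℕ} (w : Equiv.Perm (Fin n)) :
    (oneLineF w).Perm (List.finRange n) := by
  rw [List.perm_ext_iff_of_nodup (oneLineF_nodup w) (List.nodup_finRange n)]
  intro x
  simp only [List.mem_finRange, iff_true, oneLineF, List.mem_map]
  exact ⟨w⁻¹ x, trivial, w.apply_symm_apply x⟩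

/-- The key word-level description of `φ`. -/
lemma phi_word_N {n : ℕ} {w w' : Equiv.Perm (Fin n)} (h : IsPhi w w') :
    oneLineN w' = ((blocks ((oneLineN w).reverse)).map rev1).flatten := by
  obtain ⟨u, hu, hw'⟩ := h
  have hF : oneLineF w' = ((blocks ((oneLineF w).reverse)).map rev1).flatten := by
    rw [hw', foataWord_inv u, hu]
  have hrevnd : ((oneLineF w).reverse).Nodup := List.nodup_reverse.2 (oneLineF_nodup w)
  have hmap := congrArg (List.map Fin.val) hF
  rw [← oneLineN_eq] at hmap
  rw [hmap, List.map_flatten]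
  have h1 : ((blocks (oneLineF w).reverse).map rev1).map (List.map Fin.val)
      = ((blocks (oneLineF w).reverse).map (List.map Fin.val)).map rev1 := by
    rw [List.map_map, List.map_map]
    apply List.map_congr_left
    intro b _
    exact (rev1_map Fin.val b).symm
  rw [h1]
  have h2 : (blocks (oneLineF w).reverse).map (List.map Fin.val)
      = blocks (((oneLineF w).reverse).map Fin.val) := by
    rw [blocks_map Fin.val hrevnd]
    intro x _ y _ hxy
    exact hxy
  rw [h2]
  have h3 : ((oneLineF w).reverse).map Fin.val = (oneLineN w).reverse := by
    rw [oneLineN_eq, List.map_reverse]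
  rw [h3]

end Foata

section PhiProof
open Foata

/-- Let `φ = F ∘ I ∘ F⁻¹ ∘ R`.  If `w = A n B` in one-line
notation (`A`, `B` the subwords before and after the maximal letter, which is
`n - 1` in 0-indexed values), then `φ(w) = φ(B) n A`, where `φ` is applied to
the partial permutation `B` via the canonical order-isomorphism. -/
theorem phi_recursion (n : ℕ) (w w' : Equiv.Perm (Fin n)) (A B B' : List ℕ)
    (hw : oneLineN w = A ++ (n - 1) :: B)
    (hphi : IsPhi w w')
    (hB : IsPhiWord B B') :
    oneLineN w' = B' ++ (n - 1) :: A := by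
  classical
  have hn : 0 < n := by
    have hlen := congrArg List.length hw
    simp only [oneLineN, List.length_map, List.length_finRange, List.length_append,
      List.length_cons] at hlen
    omega
  have hndN : (A ++ (n - 1) :: B).Nodup := by
    rw [← hw, oneLineN_eq]
    exact (oneLineF_nodup w).map Fin.val_injective
  have hmemlt : ∀ x ∈ A ++ (n - 1) :: B, x < n := by
    intro x hx
    rw [← hw] at hx
    simp only [oneLineN, List.mem_map] at hx
    obtain ⟨i, -, rfl⟩ := hx
    exact (w i).isLt
  obtain ⟨hndA, hndCB, hdisj⟩ := List.nodup_append.1 hndN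
  have hnB : (n - 1) ∉ B := (List.nodup_cons.1 hndCB).1
  have hndB : B.Nodup := (List.nodup_cons.1 hndCB).2
  have hnA : (n - 1) ∉ A := fun h => hdisj _ h _ (List.mem_cons_self) rfl
  have hAlt : ∀ x ∈ A, x < n - 1 := by
    intro x hx
    have h1 : x < n := hmemlt x (List.mem_append_left _ hx)
    have h2 : x ≠ n - 1 := fun he => hnA (he ▸ hx)
    omega
  have hBlt : ∀ x ∈ B, x < n - 1 := by
    intro x hx
    have h1 : x < n := hmemlt x (List.mem_append_right _ (List.mem_cons_of_mem _ hx))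
    have h2 : x ≠ n - 1 := fun he => hnB (he ▸ hx)
    omega
  -- compute oneLineN w'
  have hmain := phi_word_N hphi
  rw [hw] at hmain
  have hrev : (A ++ (n - 1) :: B).reverse = B.reverse ++ (n - 1) :: A.reverse := by
    simp
  rw [hrev, blocks_append_top (List.nodup_reverse.2 hndB)
    (fun x hx => hBlt x (List.mem_reverse.1 hx))
    (fun y hy => hAlt y (List.mem_reverse.1 hy))] at hmain
  have hsplit : ((blocks B.reverse ++ [(n - 1) :: A.reverse]).map rev1).flatten
      = ((blocks B.reverse).map rev1).flatten ++ ((n - 1) :: A) := by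
    rw [List.map_append, List.flatten_append]
    simp
  rw [hsplit] at hmain
  -- identify B' with the B-part
  obtain ⟨hBperm, u₀, u₀', h1, h2, h3⟩ := hB
  have h4 := phi_word_N h2
  rw [h1] at h4
  have h5 : stdz B' = ((blocks ((stdz B).reverse)).map rev1).flatten := by rw [h3, h4]
  have hstB' : stdz B' = B'.map (fun x => (B.filter fun y => decide (y < x)).length) := by
    rw [stdz]
    apply List.map_congr_left
    intro x _
    rw [← List.countP_eq_length_filter, ← List.countP_eq_length_filter]
    exact hBperm.countP_eq _
  have hσmono : ∀ x ∈ B, ∀ y ∈ B, x < y →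
      (B.filter fun z => decide (z < x)).length < (B.filter fun z => decide (z < y)).length := by
    intro x hx y hy hxy
    rw [← List.countP_eq_length_filter, ← List.countP_eq_length_filter]
    refine countP_lt (fun a _ h => ?_) hx (by simp [hxy]) (by simp)
    simp only [decide_eq_true_eq] at h ⊢
    omega
  have h6 : (stdz B).reverse
      = (B.reverse).map (fun x => (B.filter fun y => decide (y < x)).length) := by
    rw [stdz, List.map_reverse]
  rw [h6, blocks_map _ (List.nodup_reverse.2 hndB)
    (fun x hx y hy h => hσmono x (List.mem_reverse.1 hx) y (List.mem_reverse.1 hy) h)] at h5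
  have h7 : (((blocks B.reverse).map
        (List.map (fun x => (B.filter fun y => decide (y < x)).length))).map rev1).flatten
      = (((blocks B.reverse).map rev1).flatten).map
          (fun x => (B.filter fun y => decide (y < x)).length) := by
    rw [List.map_flatten, List.map_map, List.map_map]
    congr 1
    apply List.map_congr_left
    intro b _
    simp only [Function.comp_apply]
    exact rev1_map _ b
  rw [h7, hstB'] at h5
  have hWperm : (((blocks B.reverse).map rev1).flatten).Perm B.reverse :=
    (flatten_map_rev1_perm _).trans (by rw [flatten_blocks])
  have hWmem : ∀ x ∈ ((blocks B.reverse).map rev1).flatten, x ∈ B :=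
    fun x hx => List.mem_reverse.1 (hWperm.mem_iff.1 hx)
  have hinj : ∀ x ∈ B, ∀ y ∈ B,
      (B.filter fun z => decide (z < x)).length = (B.filter fun z => decide (z < y)).length →
      x = y := by
    intro x hx y hy he
    rcases lt_trichotomy x y with h | h | h
    · exact absurd he (ne_of_lt (hσmono x hx y hy h))
    · exact h
    · exact absurd he.symm (ne_of_lt (hσmono y hy x hx h))
  have hB'W : B' = ((blocks B.reverse).map rev1).flatten :=
    map_cancel B (fun x hx => hBperm.subset hx) hWmem hinj h5
  rw [hmain, hB'W]

end PhiProof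
end

section
/- For n ≥ 2, the GCD of the orbit sizes of φ = F ∘ I ∘ F^{-1} ∘ R acting on S_n equals 2^{⌊log₂ n⌋}, the greatest power of 2 that is at most n. -/
namespace PhiProof

variable {α : Type*} [LinearOrder α]

theorem max?_eq_some_iff_lo {a : α} {xs : List α} :
    xs.max? = some a ↔ a ∈ xs ∧ ∀ b ∈ xs, b ≤ a := by
  haveI : Std.Antisymm ((· ≤ ·) : α → α → Prop) := ⟨fun _ _ h1 h2 => le_antisymm h1 h2⟩
  exact List.max?_eq_some_iff_legacy (fun _ => le_refl _) max_choice (fun _ _ _ => max_le_iff)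

/-- The word map: `Phi (A ++ M :: B) = Phi B ++ M :: A` where `M` is the max. -/
def PhiA : ℕ → List α → List α
  | 0, _ => []
  | (k+1), v =>
    match v.max? with
    | none => []
    | some M => PhiA k ((v.dropWhile (· ≠ M)).tail) ++ M :: v.takeWhile (· ≠ M)

def Phi (v : List α) : List α := PhiA v.length v

theorem max?_of_strict {A B : List α} {M : α}
    (hA : ∀ y ∈ A, y < M) (hB : ∀ y ∈ B, y < M) :
    (A ++ M :: B).max? = some M := by
  rw [max?_eq_some_iff_lo]
  refine ⟨by simp, ?_⟩
  intro b hb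
  rcases List.mem_append.1 hb with h | h
  · exact (hA b h).le
  · rcases List.mem_cons.1 h with rfl | h
    · exact le_refl _
    · exact (hB b h).le

theorem takeWhile_strict {A B : List α} {M : α} (hA : ∀ y ∈ A, y < M) :
    (A ++ M :: B).takeWhile (· ≠ M) = A := by
  induction A with
  | nil => simp [List.takeWhile]
  | cons a t ih =>
      have ha : a ≠ M := ne_of_lt (hA a (by simp))
      have ih' := ih (fun y hy => hA y (by simp [hy]))
      simp only [ne_eq, decide_not] at ih' ⊢
      simp only [List.cons_append, List.takeWhile_cons]
      simp [ha, ih']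

theorem dropWhile_strict {A B : List α} {M : α} (hA : ∀ y ∈ A, y < M) :
    (A ++ M :: B).dropWhile (· ≠ M) = M :: B := by
  induction A with
  | nil => simp [List.dropWhile]
  | cons a t ih =>
      have ha : a ≠ M := ne_of_lt (hA a (by simp))
      have ih' := ih (fun y hy => hA y (by simp [hy]))
      simp only [ne_eq, decide_not] at ih' ⊢
      simp only [List.cons_append, List.dropWhile_cons]
      simp [ha, ih']

theorem length_strong_induction {P : List α → Prop}
    (h : ∀ v : List α, (∀ u : List α, u.length < v.length → P u) → P v) :
    ∀ v, P v := by
  have H : ∀ (n : ℕ) (v : List α), v.length = n → P v := by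
    intro n
    induction n using Nat.strong_induction_on with
    | _ n ih =>
      intro v hn
      exact h v (fun u hu => ih u.length (by omega) u rfl)
  exact fun v => H v.length v rfl

theorem PhiA_nil (k : ℕ) : PhiA (α := α) k [] = [] := by
  cases k <;> simp [PhiA]

theorem PhiA_stable : ∀ (v : List α) (k₁ k₂ : ℕ), v.length ≤ k₁ → v.length ≤ k₂ →
    PhiA k₁ v = PhiA k₂ v := by
  intro v
  induction v using length_strong_induction with
  | _ v ih =>
    intro k₁ k₂ h1 h2
    rcases v with _ | ⟨a, t⟩
    · simp [PhiA_nil]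
    · set v := a :: t with hveq
      have hv1 : 1 ≤ v.length := by rw [hveq]; simp
      obtain ⟨m₁, rfl⟩ : ∃ m, k₁ = m + 1 := ⟨k₁ - 1, by omega⟩
      obtain ⟨m₂, rfl⟩ : ∃ m, k₂ = m + 1 := ⟨k₂ - 1, by omega⟩
      obtain ⟨M, hM⟩ : ∃ M, v.max? = some M := by
        cases h : v.max? with
        | none => exact absurd (List.max?_eq_none_iff.1 h) (by simp [hveq])
        | some M => exact ⟨M, rfl⟩
      have hMmem : M ∈ v := (max?_eq_some_iff_lo.1 hM).1
      have hdropne : v.dropWhile (· ≠ M) ≠ [] := by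
        intro h
        have := List.dropWhile_eq_nil_iff.1 h M hMmem
        simp at this
      have hlt : ((v.dropWhile (· ≠ M)).tail).length < v.length := by
        have h1 : (v.dropWhile (· ≠ M)).length ≤ v.length :=
          (List.dropWhile_sublist _).length_le
        have h2 : 0 < (v.dropWhile (· ≠ M)).length := List.length_pos_iff.2 hdropne
        rw [List.length_tail]
        simp [hveq] at h1 ⊢
        omega
      simp only [PhiA, hM]
      rw [ih _ hlt m₁ m₂ (by omega) (by omega)]

theorem Phi_nil : Phi (α := α) [] = [] := rfl

theorem Phi_eq {A B : List α} {M : α}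
    (hA : ∀ y ∈ A, y < M) (hB : ∀ y ∈ B, y < M) :
    Phi (A ++ M :: B) = Phi B ++ M :: A := by
  have hlen : (A ++ M :: B).length = A.length + B.length + 1 := by simp only [List.length_append, List.length_cons]; omega
  rw [Phi, hlen]
  simp only [PhiA, max?_of_strict hA hB, dropWhile_strict hA, takeWhile_strict hA,
    List.tail_cons]
  rw [PhiA_stable B _ B.length (by omega) (le_refl _)]
  rfl

theorem Phi_singleton (a : α) : Phi [a] = [a] := by
  have := Phi_eq (A := ([] : List α)) (B := ([] : List α)) (M := a)
    (by simp) (by simp)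
  simpa [Phi_nil] using this

/-- Decomposition of a nonempty nodup list at its (unique) maximum. -/
theorem exists_decomp {v : List α} (hv : v.Nodup) (hne : v ≠ []) :
    ∃ A M B, v = A ++ M :: B ∧ (∀ y ∈ A, y < M) ∧ (∀ y ∈ B, y < M) := by
  obtain ⟨M, hM⟩ : ∃ M, v.max? = some M := by
    cases h : v.max? with
    | none => exact absurd (List.max?_eq_none_iff.1 h) hne
    | some M => exact ⟨M, rfl⟩
  obtain ⟨hmem, hle⟩ := max?_eq_some_iff_lo.1 hM
  obtain ⟨A, B, rfl⟩ := List.append_of_mem hmem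
  have hnodup := hv
  rw [List.nodup_append] at hnodup
  obtain ⟨hA, hB, hdisj⟩ := hnodup
  refine ⟨A, M, B, rfl, ?_, ?_⟩
  · intro y hy
    have hyM : y ≤ M := hle y (by simp [hy])
    rcases lt_or_eq_of_le hyM with h | rfl
    · exact h
    · exact absurd rfl (hdisj y hy y (by simp))
  · intro y hy
    have hyM : y ≤ M := hle y (by simp [hy])
    rcases lt_or_eq_of_le hyM with h | rfl
    · exact h
    · exact absurd hy (by
        have := List.Nodup.of_append_right hv
        exact (List.nodup_cons.1 this).1)

theorem Phi_perm : ∀ (v : List α), v.Nodup → (Phi v).Perm v := by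
  intro v
  induction v using length_strong_induction with
  | _ v ih =>
    intro hv
    rcases eq_or_ne v [] with rfl | hne
    · simp [Phi_nil]
    · obtain ⟨A, M, B, rfl, hA, hB⟩ := exists_decomp hv hne
      rw [Phi_eq hA hB]
      have hBn : B.Nodup := (List.Nodup.of_append_right hv).of_cons
      have hBl : B.length < (A ++ M :: B).length := by simp only [List.length_append, List.length_cons]; omega
      refine ((ih B hBl hBn).append_right _).trans ?_
      have h1 : (B ++ M :: A).Perm ((M :: A) ++ B) := List.perm_append_comm
      have h2 : ((M :: B) ++ A).Perm (A ++ (M :: B)) := List.perm_append_comm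
      refine h1.trans (List.Perm.trans ?_ h2)
      show (M :: (A ++ B)).Perm (M :: (B ++ A))
      exact (List.perm_append_comm).cons M

/-! ### The height function -/

def HA : ℕ → List α → ℕ
  | 0, _ => 0
  | (k+1), v =>
    match v.max? with
    | none => 0
    | some M =>
        if v.takeWhile (· ≠ M) = [] ∧ ((v.dropWhile (· ≠ M)).tail) = [] then 0
        else (max (HA k (v.takeWhile (· ≠ M))) (HA k ((v.dropWhile (· ≠ M)).tail))) + 1

def Hh (v : List α) : ℕ := HA v.length v

theorem HA_nil (k : ℕ) : HA (α := α) k [] = 0 := by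
  cases k <;> simp [HA]

theorem HA_stable : ∀ (v : List α) (k₁ k₂ : ℕ), v.length ≤ k₁ → v.length ≤ k₂ →
    HA k₁ v = HA k₂ v := by
  intro v
  induction v using length_strong_induction with
  | _ v ih =>
    intro k₁ k₂ h1 h2
    rcases v with _ | ⟨a, t⟩
    · simp [HA_nil]
    · set v := a :: t with hveq
      have hv1 : 1 ≤ v.length := by rw [hveq]; simp
      obtain ⟨m₁, rfl⟩ : ∃ m, k₁ = m + 1 := ⟨k₁ - 1, by omega⟩
      obtain ⟨m₂, rfl⟩ : ∃ m, k₂ = m + 1 := ⟨k₂ - 1, by omega⟩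
      obtain ⟨M, hM⟩ : ∃ M, v.max? = some M := by
        cases h : v.max? with
        | none => exact absurd (List.max?_eq_none_iff.1 h) (by simp [hveq])
        | some M => exact ⟨M, rfl⟩
      have hMmem : M ∈ v := (max?_eq_some_iff_lo.1 hM).1
      have hdropne : v.dropWhile (· ≠ M) ≠ [] := by
        intro h
        have := List.dropWhile_eq_nil_iff.1 h M hMmem
        simp at this
      have hltB : ((v.dropWhile (· ≠ M)).tail).length < v.length := by
        have h1 : (v.dropWhile (· ≠ M)).length ≤ v.length :=
          (List.dropWhile_sublist _).length_le
        have h2 : 0 < (v.dropWhile (· ≠ M)).length := List.length_pos_iff.2 hdropne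
        rw [List.length_tail]
        omega
      have hltA : (v.takeWhile (· ≠ M)).length < v.length := by
        have h3 : (v.takeWhile (· ≠ M)).length + (v.dropWhile (· ≠ M)).length
            = v.length := by
          rw [← List.length_append, List.takeWhile_append_dropWhile]
        have h2 : 0 < (v.dropWhile (· ≠ M)).length := List.length_pos_iff.2 hdropne
        omega
      simp only [HA, hM]
      rw [ih _ hltA m₁ m₂ (by omega) (by omega), ih _ hltB m₁ m₂ (by omega) (by omega)]

theorem Hh_nil : Hh (α := α) [] = 0 := rfl

theorem Hh_eq {A B : List α} {M : α}
    (hA : ∀ y ∈ A, y < M) (hB : ∀ y ∈ B, y < M) (hne : ¬(A = [] ∧ B = [])) :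
    Hh (A ++ M :: B) = max (Hh A) (Hh B) + 1 := by
  have hlen : (A ++ M :: B).length = A.length + B.length + 1 := by simp only [List.length_append, List.length_cons]; omega
  rw [Hh, hlen]
  simp only [HA, max?_of_strict hA hB, dropWhile_strict hA, takeWhile_strict hA,
    List.tail_cons]
  rw [if_neg hne]
  rw [HA_stable A _ A.length (by omega) (le_refl _),
    HA_stable B _ B.length (by omega) (le_refl _)]
  rfl

theorem Hh_singleton (a : α) : Hh [a] = 0 := by
  have hlen : ([a] : List α).length = 1 := rfl
  rw [Hh, hlen]
  have hmax : ([a] : List α).max? = some a :=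
    max?_of_strict (A := []) (B := []) (by simp) (by simp)
  simp only [HA, hmax]
  simp [List.takeWhile, List.dropWhile]

/-! ### Iterates of Phi -/

theorem Phi_iter_perm {v : List α} (hv : v.Nodup) (k : ℕ) : (Phi^[k] v).Perm v := by
  induction k with
  | zero => simp
  | succ k ih =>
      rw [Function.iterate_succ_apply']
      exact (Phi_perm _ (ih.symm.nodup hv)).trans ih

theorem Phi_iter_two {A B : List α} {M : α} (hv : (A ++ M :: B).Nodup)
    (hA : ∀ y ∈ A, y < M) (hB : ∀ y ∈ B, y < M) :
    ∀ k, Phi^[2*k] (A ++ M :: B) = Phi^[k] A ++ M :: Phi^[k] B := by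
  have hAn : A.Nodup := hv.of_append_left
  have hBn : B.Nodup := hv.of_append_right.of_cons
  intro k
  induction k with
  | zero => simp
  | succ k ih =>
      have e1 : 2 * (k+1) = (2*k) + 1 + 1 := by ring
      rw [e1, Function.iterate_succ_apply', Function.iterate_succ_apply', ih]
      have hA' : ∀ y ∈ Phi^[k] A, y < M := fun y hy => hA y ((Phi_iter_perm hAn k).mem_iff.1 hy)
      have hB' : ∀ y ∈ Phi^[k] B, y < M := fun y hy => hB y ((Phi_iter_perm hBn k).mem_iff.1 hy)
      rw [Phi_eq hA' hB']
      have hA'' : ∀ y ∈ Phi (Phi^[k] B), y < M := fun y hy =>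
        hB' y ((Phi_perm _ ((Phi_iter_perm hBn k).symm.nodup hBn)).mem_iff.1 hy)
      rw [Phi_eq hA'' hA']
      rw [Function.iterate_succ_apply' Phi k A, Function.iterate_succ_apply' Phi k B]

theorem minimalPeriod_Phi : ∀ (v : List α), v.Nodup →
    Function.minimalPeriod Phi v = 2 ^ Hh v := by
  intro v
  induction v using length_strong_induction with
  | _ v ih =>
    intro hv
    by_cases hshort : v.length ≤ 1
    · -- fixed point cases
      have hfix : Function.IsFixedPt Phi v := by
        rcases v with _ | ⟨a, t⟩
        · exact Phi_nil
        · have : t = [] := List.length_eq_zero_iff.1 (by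
            simp only [List.length_cons] at hshort; omega)
          subst this
          exact Phi_singleton a
      have h0 : Hh v = 0 := by
        rcases v with _ | ⟨a, t⟩
        · exact Hh_nil
        · have : t = [] := List.length_eq_zero_iff.1 (by
            simp only [List.length_cons] at hshort; omega)
          subst this
          exact Hh_singleton a
      rw [h0, pow_zero, Function.minimalPeriod_eq_one_iff_isFixedPt.2 hfix]
    · obtain ⟨A, M, B, rfl, hA, hB⟩ := exists_decomp hv (by
        intro h; rw [h] at hshort; simp at hshort)
      set v := A ++ M :: B with hveq
      have hAn : A.Nodup := hv.of_append_left
      have hBn : B.Nodup := hv.of_append_right.of_cons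
      have hlenv : v.length = A.length + B.length + 1 := by rw [hveq]; simp; omega
      have hne' : ¬(A = [] ∧ B = []) := by
        rintro ⟨rfl, rfl⟩
        rw [hveq] at hshort; simp at hshort
      have hHv : Hh v = max (Hh A) (Hh B) + 1 := Hh_eq hA hB hne'
      have hltA : A.length < v.length := by omega
      have hltB : B.length < v.length := by omega
      have ihA := ih A hltA hAn
      have ihB := ih B hltB hBn
      set h := max (Hh A) (Hh B) with hdef
      -- v is periodic with period 2^(h+1)
      have hper : Function.IsPeriodicPt Phi (2 ^ (h+1)) v := by
        show Phi^[2 ^ (h+1)] v = v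
        have e2 : 2 ^ (h+1) = 2 * 2 ^ h := by ring
        rw [hveq, e2, Phi_iter_two hv hA hB (2 ^ h)]
        have hAfix : Phi^[2 ^ h] A = A := by
          have : Function.IsPeriodicPt Phi (2 ^ h) A :=
            Function.isPeriodicPt_iff_minimalPeriod_dvd.2
              (by rw [ihA]; exact pow_dvd_pow 2 (le_max_left _ _))
          exact this
        have hBfix : Phi^[2 ^ h] B = B := by
          have : Function.IsPeriodicPt Phi (2 ^ h) B :=
            Function.isPeriodicPt_iff_minimalPeriod_dvd.2
              (by rw [ihB]; exact pow_dvd_pow 2 (le_max_right _ _))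
          exact this
        rw [hAfix, hBfix]
      set p := Function.minimalPeriod Phi v with hpdef
      have hdvd : p ∣ 2 ^ (h+1) := Function.isPeriodicPt_iff_minimalPeriod_dvd.1 hper
      obtain ⟨j, hj, hpj⟩ := (Nat.dvd_prime_pow Nat.prime_two).1 hdvd
      have hppos : 0 < p := Function.IsPeriodicPt.minimalPeriod_pos
        (pow_pos (by norm_num) _) hper
      -- j cannot be 0
      rcases Nat.eq_zero_or_pos j with rfl | hjpos
      · exfalso
        have hp1 : p = 1 := by rw [hpj, pow_zero]
        have hfix : Phi v = v := Function.minimalPeriod_eq_one_iff_isFixedPt.1 hp1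
        rw [hveq, Phi_eq hA hB] at hfix
        -- two decompositions of the same list
        have hPhiB : ∀ y ∈ Phi B, y < M := fun y hy => hB y ((Phi_perm B hBn).mem_iff.1 hy)
        have t1 : (Phi B ++ M :: A).takeWhile (· ≠ M) = Phi B := takeWhile_strict hPhiB
        have t2 : (A ++ M :: B).takeWhile (· ≠ M) = A := takeWhile_strict hA
        have hPhiBA : Phi B = A := by rw [← t1, hfix, t2]
        have d1 : (Phi B ++ M :: A).dropWhile (· ≠ M) = M :: A := dropWhile_strict hPhiB
        have d2 : (A ++ M :: B).dropWhile (· ≠ M) = M :: B := dropWhile_strict hA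
        have hMA : (M :: A : List α) = M :: B := by rw [← d1, hfix, d2]
        have hABeq : A = B := by injection hMA
        -- disjointness forces A = B = []
        have hdisj : A.Disjoint (M :: B) := fun a ha hb => (List.nodup_append.1 hv).2.2 a ha a hb rfl
        have hAnil : A = [] := by
          by_contra hne2
          obtain ⟨a, ha⟩ := List.exists_mem_of_ne_nil A hne2
          exact hdisj ha (List.mem_cons.2 (Or.inr (hABeq ▸ ha)))
        exact hne' ⟨hAnil, hABeq ▸ hAnil⟩
      -- j ≥ 1 : show 2^(h+1) ∣ p
      obtain ⟨i, rfl⟩ : ∃ i, j = i + 1 := ⟨j - 1, by omega⟩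
      have hper_p : Function.IsPeriodicPt Phi p v := Function.isPeriodicPt_minimalPeriod Phi v
      have e3 : p = 2 * 2 ^ i := by rw [hpj]; ring
      have : Phi^[2 * 2 ^ i] v = v := by rw [← e3]; exact hper_p
      rw [hveq, Phi_iter_two hv hA hB (2 ^ i)] at this
      have hlenA : (Phi^[2 ^ i] A).length = A.length := (Phi_iter_perm hAn _).length_eq
      obtain ⟨hAeq, hMB⟩ := List.append_inj this hlenA
      have hBeq : Phi^[2 ^ i] B = B := by injection hMB
      have hdA : 2 ^ Hh A ∣ 2 ^ i := by
        rw [← ihA]; exact Function.isPeriodicPt_iff_minimalPeriod_dvd.1 hAeq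
      have hdB : 2 ^ Hh B ∣ 2 ^ i := by
        rw [← ihB]; exact Function.isPeriodicPt_iff_minimalPeriod_dvd.1 hBeq
      have hdh : 2 ^ h ∣ 2 ^ i := by
        rcases max_cases (Hh A) (Hh B) with ⟨he, _⟩ | ⟨he, _⟩
        · rw [hdef, he]; exact hdA
        · rw [hdef, he]; exact hdB
      have : 2 ^ (h + 1) ∣ p := by
        rw [e3, pow_succ]
        have := mul_dvd_mul_left 2 hdh
        calc 2 ^ h * 2 = 2 * 2 ^ h := by ring
          _ ∣ 2 * 2 ^ i := mul_dvd_mul_left 2 hdh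
      rw [hHv]
      exact Nat.dvd_antisymm hdvd this

theorem length_lt_pow_Hh : ∀ (v : List α), v.Nodup → v.length < 2 ^ (Hh v + 1) := by
  intro v
  induction v using length_strong_induction with
  | _ v ih =>
    intro hv
    rcases eq_or_ne v [] with rfl | hne
    · simp
    · obtain ⟨A, M, B, rfl, hA, hB⟩ := exists_decomp hv hne
      by_cases hee : A = [] ∧ B = []
      · obtain ⟨rfl, rfl⟩ := hee
        simp [Hh_singleton]
      · have hAn : A.Nodup := hv.of_append_left
        have hBn : B.Nodup := hv.of_append_right.of_cons
        have hltA : A.length < (A ++ M :: B).length := by simp only [List.length_append, List.length_cons]; omega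
        have hltB : B.length < (A ++ M :: B).length := by simp only [List.length_append, List.length_cons]; omega
        have iA := ih A hltA hAn
        have iB := ih B hltB hBn
        rw [Hh_eq hA hB hee]
        have e1 : (A ++ M :: B).length = A.length + B.length + 1 := by simp only [List.length_append, List.length_cons]; omega
        rw [e1]
        have bA : 2 ^ (Hh A + 1) ≤ 2 ^ (max (Hh A) (Hh B) + 1) :=
          Nat.pow_le_pow_right (by norm_num) (by omega)
        have bB : 2 ^ (Hh B + 1) ≤ 2 ^ (max (Hh A) (Hh B) + 1) :=
          Nat.pow_le_pow_right (by norm_num) (by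
            have := le_max_right (Hh A) (Hh B); omega)
        have : 2 ^ (max (Hh A) (Hh B) + 1 + 1) = 2 ^ (max (Hh A) (Hh B) + 1) +
            2 ^ (max (Hh A) (Hh B) + 1) := by ring
        omega

/-! ### Balanced words -/

def balA : ℕ → List α → List α
  | 0, l => l
  | (fuel+1), l =>
    if l.length ≤ 1 then l else
      balA fuel ((l.take (l.length - 1)).take ((l.length - 1 + 1)/2))
        ++ l.drop (l.length - 1)
        ++ balA fuel ((l.take (l.length - 1)).drop ((l.length - 1 + 1)/2))

theorem balA_perm : ∀ (fuel : ℕ) (l : List α), (balA fuel l).Perm l := by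
  intro fuel
  induction fuel with
  | zero => intro l; simp [balA]
  | succ fuel ih =>
      intro l
      by_cases h : l.length ≤ 1
      · simp [balA, h]
      · rw [balA, if_neg h]
        set t := l.length - 1
        set k := (t + 1) / 2
        refine List.Perm.trans (((ih _).append_right _).append (ih _)) ?_
        have e2 : (l.take t).take k ++ (l.take t).drop k ++ l.drop t = l := by
          rw [List.take_append_drop, List.take_append_drop]
        have p1 : ((l.take t).take k ++ l.drop t ++ (l.take t).drop k).Perm
            ((l.take t).take k ++ ((l.take t).drop k ++ l.drop t)) := by
          rw [List.append_assoc]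
          exact List.Perm.append_left _ List.perm_append_comm
        refine p1.trans ?_
        rw [← List.append_assoc, e2]

theorem Hh_short {l : List α} (h : l.length ≤ 1) : Hh l = 0 := by
  rcases l with _ | ⟨a, t⟩
  · exact Hh_nil
  · have : t = [] := List.length_eq_zero_iff.1 (by
      simp only [List.length_cons] at h; omega)
    subst this
    exact Hh_singleton a

theorem balA_Hh : ∀ (fuel : ℕ) (l : List α), l.Pairwise (· < ·) →
    l.length ≤ fuel + 1 → Hh (balA fuel l) ≤ Nat.log 2 l.length := by
  intro fuel
  induction fuel with
  | zero =>
      intro l _ hl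
      rw [balA, Hh_short hl]
      exact Nat.zero_le _
  | succ fuel ih =>
      intro l hpw hl
      by_cases h : l.length ≤ 1
      · rw [balA, if_pos h, Hh_short h]
        exact Nat.zero_le _
      · rw [balA, if_neg h]
        have hlen2 : 2 ≤ l.length := by omega
        set n := l.length with hn
        set t := n - 1 with ht
        set k := (t + 1) / 2 with hk
        set P1 := (l.take t).take k with hP1
        set P2 := (l.take t).drop k with hP2
        -- the dropped part is a singleton
        have hdl : (l.drop t).length = 1 := by rw [List.length_drop]; omega
        obtain ⟨M, hM⟩ : ∃ M, l.drop t = [M] := by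
          rcases hld : l.drop t with _ | ⟨M, rest⟩
          · rw [hld] at hdl; simp at hdl
          · rw [hld] at hdl
            simp only [List.length_cons] at hdl
            have : rest = [] := List.length_eq_zero_iff.1 (by omega)
            exact ⟨M, by rw [this]⟩
        -- all elements of the take part are < M
        have htake : ∀ y ∈ l.take t, y < M := by
          have hsplit : l.take t ++ l.drop t = l := List.take_append_drop t l
          have hpw2 : (l.take t ++ l.drop t).Pairwise (· < ·) := by rw [hsplit]; exact hpw
          intro y hy
          exact (List.pairwise_append.1 hpw2).2.2 y hy M (by rw [hM]; simp)
        have hXmem : ∀ y ∈ balA fuel P1, y < M := fun y hy =>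
          htake y (List.take_subset _ _ ((balA_perm fuel P1).subset hy))
        have hYmem : ∀ y ∈ balA fuel P2, y < M := fun y hy =>
          htake y (List.drop_subset _ _ ((balA_perm fuel P2).subset hy))
        -- rewrite into the A ++ M :: B shape
        have hshape : balA fuel P1 ++ l.drop t ++ balA fuel P2
            = balA fuel P1 ++ M :: balA fuel P2 := by
          rw [hM, List.append_assoc, List.singleton_append]
        rw [hshape]
        -- lengths
        have hkt : k ≤ t := by omega
        have hlP1 : P1.length = k := by
          rw [hP1, List.length_take, List.length_take]
          omega
        have hlP2 : P2.length = t - k := by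
          rw [hP2, List.length_drop, List.length_take]
          omega
        have hpw1 : P1.Pairwise (· < ·) := List.Pairwise.sublist
          ((List.take_sublist _ _).trans (List.take_sublist _ _)) hpw
        have hpwP2 : P2.Pairwise (· < ·) := List.Pairwise.sublist
          ((List.drop_sublist _ _).trans (List.take_sublist _ _)) hpw
        have iX := ih P1 hpw1 (by omega)
        have iY := ih P2 hpwP2 (by omega)
        set L := Nat.log 2 n with hL
        have hLpos : 0 < L := Nat.log_pos (by norm_num) hlen2
        have hnlt : n < 2 ^ (L + 1) := Nat.lt_pow_succ_log_self (by norm_num) n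
        have hp2 : 2 ^ (L + 1) = 2 * 2 ^ L := by ring
        have hkL : k < 2 ^ L := by omega
        have htkL : t - k < 2 ^ L := by omega
        have hlogk : Nat.log 2 k < L := by
          rcases Nat.eq_zero_or_pos k with he | hkpos
          · rw [he]; simpa using hLpos
          · exact Nat.log_lt_of_lt_pow (by omega) hkL
        have hlogtk : Nat.log 2 (t - k) < L := by
          rcases Nat.eq_zero_or_pos (t - k) with he | hkpos
          · rw [he]; simpa using hLpos
          · exact Nat.log_lt_of_lt_pow (by omega) htkL
        by_cases hee : balA fuel P1 = [] ∧ balA fuel P2 = []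
        · rw [hee.1, hee.2]
          rw [show ([] ++ M :: [] : List α) = [M] by simp, Hh_singleton]
          exact Nat.zero_le _
        · rw [Hh_eq hXmem hYmem hee]
          rw [hlP1] at iX
          rw [hlP2] at iY
          omega

/-! ### A reversal helper -/

theorem reverse_map_range {β : Type*} (t : ℕ) (f : ℕ → β) :
    (List.map f (List.range t)).reverse = List.map (fun k => f (t - 1 - k)) (List.range t) := by
  apply List.ext_getElem
  · simp
  · intro i h1 h2
    simp only [List.length_reverse, List.length_map, List.length_range] at h1 h2
    rw [List.getElem_reverse]
    simp only [List.getElem_map, List.getElem_range, List.length_map, List.length_range]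

/-! ### The generalized block lemma -/

theorem phi_blocks (cs : List (α × List α))
    (h1 : ∀ p ∈ cs, ∀ y ∈ p.2, y < p.1)
    (h2 : (cs.map Prod.fst).Pairwise (· < ·)) :
    Phi ((cs.flatMap (fun p => p.1 :: p.2)).reverse)
      = cs.flatMap (fun p => p.1 :: p.2.reverse) := by
  induction cs using List.reverseRecOn with
  | nil => simp [Phi_nil]
  | append_singleton cs p ih =>
      obtain ⟨x, t⟩ := p
      have e1 : (cs ++ [(x, t)]).flatMap (fun p => p.1 :: p.2)
          = cs.flatMap (fun p => p.1 :: p.2) ++ (x :: t) := by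
        rw [List.flatMap_append]; simp
      have e2 : ((cs.flatMap (fun p => p.1 :: p.2)) ++ (x :: t)).reverse
          = t.reverse ++ x :: (cs.flatMap (fun p => p.1 :: p.2)).reverse := by
        rw [List.reverse_append]
        simp
      rw [e1, e2]
      have hx : ∀ p' ∈ cs, p'.1 < x := by
        intro p' hp'
        have := (List.pairwise_append.1 (by
          simpa using h2 : (cs.map Prod.fst ++ [x]).Pairwise (· < ·))).2.2
        exact this p'.1 (List.mem_map_of_mem hp') x (by simp)
      have hA : ∀ y ∈ t.reverse, y < x := by
        intro y hy
        exact h1 (x, t) (by simp) y (List.mem_reverse.1 hy)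
      have hB : ∀ y ∈ (cs.flatMap (fun p => p.1 :: p.2)).reverse, y < x := by
        intro y hy
        obtain ⟨p', hp', hyp⟩ := List.mem_flatMap.1 (List.mem_reverse.1 hy)
        rcases List.mem_cons.1 hyp with rfl | hyt
        · exact hx p' hp'
        · exact lt_trans (h1 p' (by simp [hp']) y hyt) (hx p' hp')
      rw [Phi_eq hA hB]
      rw [ih (fun p hp => h1 p (by simp [hp]))
        (by
          have := h2
          rw [List.map_append, List.pairwise_append] at this
          exact this.1)]
      rw [List.flatMap_append]
      simp

variable {n : ℕ} (u : Equiv.Perm (Fin n)) (x : Fin n)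

theorem perm_isPeriodic : Function.IsPeriodicPt (⇑u) (orderOf u) x := by
  show (⇑u)^[orderOf u] x = x
  rw [← Equiv.Perm.coe_pow, pow_orderOf_eq_one]
  rfl

theorem perm_mp_pos : 0 < Function.minimalPeriod (⇑u) x :=
  (perm_isPeriodic u x).minimalPeriod_pos (orderOf_pos u)

theorem perm_mp_le : Function.minimalPeriod (⇑u) x ≤ n := by
  set m := Function.minimalPeriod (⇑u) x
  have hinj : ((List.range m).map (fun k => (⇑u)^[k] x)).Nodup := by
    refine List.Nodup.map_on ?_ List.nodup_range
    intro a ha b hb hab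
    exact Function.iterate_injOn_Iio_minimalPeriod
      (by simpa using List.mem_range.1 ha) (by simpa using List.mem_range.1 hb) hab
  have := hinj.length_le_card
  simpa using this

theorem cyc_eq : cyc u x =
    (List.range (Function.minimalPeriod (⇑u) x)).map (fun k => (u ^ k) x) := by
  set m := Function.minimalPeriod (⇑u) x with hm
  have hg : ∀ k : ℕ, (u ^ k) x = (⇑u)^[k] x := fun k => by rw [Equiv.Perm.coe_pow]
  have key : ∀ j : ℕ,
      (List.range j).foldl
        (fun acc k => if (u ^ k) x ∈ acc then acc else acc ++ [(u ^ k) x]) []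
      = (List.range (min j m)).map (fun k => (u ^ k) x) := by
    intro j
    induction j with
    | zero => simp
    | succ j ih =>
        rw [List.range_succ, List.foldl_append, ih]
        simp only [List.foldl_cons, List.foldl_nil]
        by_cases hj : j < m
        · have hmin : min j m = j := by omega
          have hmin2 : min (j+1) m = j + 1 := by omega
          rw [hmin, hmin2]
          have hnotmem : (u ^ j) x ∉ (List.range j).map (fun k => (u ^ k) x) := by
            intro hmem
            obtain ⟨k, hk, hke⟩ := List.mem_map.1 hmem
            have hk' : k < j := List.mem_range.1 hk
            rw [hg, hg] at hke
            have : k = j := Function.iterate_injOn_Iio_minimalPeriod (f := ⇑u) (x := x)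
              (by simp only [Set.mem_Iio, hm]; omega) (by simp only [Set.mem_Iio, hm]; omega) hke
            omega
          rw [if_neg hnotmem, List.range_succ, List.map_append]
          rfl
        · have hmin : min j m = m := by omega
          have hmin2 : min (j+1) m = m := by omega
          rw [hmin, hmin2]
          have hmem : (u ^ j) x ∈ (List.range m).map (fun k => (u ^ k) x) := by
            refine List.mem_map.2 ⟨j % m, List.mem_range.2 (Nat.mod_lt _ (perm_mp_pos u x)), ?_⟩
            rw [hg, hg, hm, Function.iterate_mod_minimalPeriod_eq]
          rw [if_pos hmem]
  have := key n
  rw [min_eq_right (perm_mp_le u x)] at this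
  exact this

theorem cyc_nodup : (cyc u x).Nodup := by
  rw [cyc_eq]
  refine List.Nodup.map_on ?_ List.nodup_range
  intro a ha b hb hab
  rw [Equiv.Perm.coe_pow, Equiv.Perm.coe_pow] at hab
  exact Function.iterate_injOn_Iio_minimalPeriod (f := ⇑u) (x := x)
    (by simpa using List.mem_range.1 ha) (by simpa using List.mem_range.1 hb) hab

theorem cyc_cons : cyc u x = x :: (List.range (Function.minimalPeriod (⇑u) x - 1)).map
    (fun k => (u ^ (k+1)) x) := by
  rw [cyc_eq]
  obtain ⟨t, ht⟩ : ∃ t, Function.minimalPeriod (⇑u) x = t + 1 :=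
    ⟨_, (Nat.succ_pred_eq_of_pos (perm_mp_pos u x)).symm⟩
  rw [ht]
  rw [List.range_succ_eq_map]
  simp only [List.map_cons, List.map_map, pow_zero, Equiv.Perm.coe_one, id_eq,
    Nat.add_sub_cancel]
  refine congrArg (fun L => x :: L) (List.map_congr_left ?_)
  intro k _
  simp only [Function.comp_apply, Nat.succ_eq_add_one]

theorem cyc_head_tail : x :: (cyc u x).tail = cyc u x := by
  rw [cyc_cons u x]
  simp only [List.tail_cons]

theorem perm_mp_inv : Function.minimalPeriod (⇑u⁻¹) x = Function.minimalPeriod (⇑u) x := by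
  have key : ∀ (v : Equiv.Perm (Fin n)) (k : ℕ),
      Function.IsPeriodicPt (⇑v⁻¹) k x ↔ Function.IsPeriodicPt (⇑v) k x := by
    intro v k
    show (⇑v⁻¹)^[k] x = x ↔ (⇑v)^[k] x = x
    rw [← Equiv.Perm.coe_pow, ← Equiv.Perm.coe_pow, inv_pow]
    constructor
    · intro h
      have h2 : (v ^ k) ((v ^ k)⁻¹ x) = x := Equiv.apply_symm_apply _ x
      rw [h] at h2
      exact h2
    · intro h
      have h2 : (v ^ k)⁻¹ ((v ^ k) x) = x := Equiv.symm_apply_apply _ x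
      rw [h] at h2
      exact h2
  apply Nat.dvd_antisymm
  · exact Function.isPeriodicPt_iff_minimalPeriod_dvd.1
      ((key u _).2 (Function.isPeriodicPt_minimalPeriod (⇑u) x))
  · have := (key u _).1 (Function.isPeriodicPt_minimalPeriod (⇑u⁻¹) x)
    exact Function.isPeriodicPt_iff_minimalPeriod_dvd.1 this

theorem pow_mp_apply : (u ^ Function.minimalPeriod (⇑u) x) x = x := by
  rw [Equiv.Perm.coe_pow]
  exact Function.isPeriodicPt_minimalPeriod (⇑u) x

theorem cyc_inv : cyc u⁻¹ x = x :: ((cyc u x).tail).reverse := by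
  set m := Function.minimalPeriod (⇑u) x with hmdef
  set t := m - 1 with htdef
  have hmt : m = t + 1 := by
    have := perm_mp_pos u x
    omega
  have h1 : cyc u⁻¹ x = x :: (List.range t).map (fun k => ((u⁻¹) ^ (k+1)) x) := by
    have := cyc_cons u⁻¹ x
    rw [perm_mp_inv] at this
    exact this
  have h2 : (cyc u x).tail = (List.range t).map (fun k => (u ^ (k+1)) x) := by
    rw [cyc_cons]
    simp only [List.tail_cons]
    rfl
  rw [h1, h2, reverse_map_range]
  refine congrArg (fun L => x :: L) (List.map_congr_left ?_)
  intro k hk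
  have hkt : k < t := List.mem_range.1 hk
  have he : t - 1 - k + 1 = t - k := by omega
  rw [he]
  apply (u ^ (k+1)).injective
  have e1 : (u ^ (k+1)) (((u⁻¹) ^ (k+1)) x) = x := by
    rw [inv_pow]
    exact Equiv.apply_symm_apply _ x
  have e2 : (u ^ (k+1)) ((u ^ (t-k)) x) = x := by
    rw [← Equiv.Perm.mul_apply, ← pow_add]
    have : k + 1 + (t - k) = m := by omega
    rw [this]
    exact pow_mp_apply u x
  rw [e1, e2]

theorem mem_cyc_inv_iff {y : Fin n} : y ∈ cyc u⁻¹ x ↔ y ∈ cyc u x := by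
  rw [cyc_inv, ← cyc_head_tail u x]
  simp [List.mem_reverse]

/-- The key bridge: the Foata word of the inverse is `Phi` of the reversed Foata word. -/
theorem foataWord_inv (u : Equiv.Perm (Fin n)) :
    foataWord u⁻¹ = Phi ((foataWord u).reverse) := by
  set xs := (List.finRange n).filter (fun x => decide (∀ y ∈ cyc u x, y ≤ x)) with hxs
  have hfilter : (List.finRange n).filter (fun x => decide (∀ y ∈ cyc u⁻¹ x, y ≤ x)) = xs := by
    rw [hxs]
    apply List.filter_congr
    intro x _
    rw [decide_eq_decide]
    constructor
    · intro h y hy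
      exact h y ((mem_cyc_inv_iff u x).2 hy)
    · intro h y hy
      exact h y ((mem_cyc_inv_iff u x).1 hy)
  have hxs_le : ∀ x ∈ xs, ∀ y ∈ cyc u x, y ≤ x := by
    intro x hx
    exact of_decide_eq_true (List.mem_filter.1 hx).2
  set cs : List (Fin n × List (Fin n)) := xs.map (fun x => (x, (cyc u x).tail)) with hcs
  have h1 : ∀ p ∈ cs, ∀ y ∈ p.2, y < p.1 := by
    intro p hp y hy
    obtain ⟨x, hx, rfl⟩ := List.mem_map.1 hp
    have hyc : y ∈ cyc u x := by
      rw [cyc_cons u x]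
      rw [cyc_cons u x] at hy
      exact List.mem_cons_of_mem _ hy
    have hle : y ≤ x := hxs_le x hx y hyc
    have hnodup := cyc_nodup u x
    rw [cyc_cons u x] at hnodup
    have hxnot : x ∉ (cyc u x).tail := by
      rw [cyc_cons u x]
      exact (List.nodup_cons.1 hnodup).1
    have : y ≠ x := by
      rintro rfl
      exact hxnot hy
    exact lt_of_le_of_ne hle this
  have h2 : (cs.map Prod.fst).Pairwise (· < ·) := by
    have : cs.map Prod.fst = xs := by
      rw [hcs, List.map_map]
      show xs.map (fun x => x) = xs
      simp
    rw [this, hxs]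
    exact (List.pairwise_lt_finRange n).filter _
  have hflat1 : cs.flatMap (fun p => p.1 :: p.2) = foataWord u := by
    rw [hcs, List.flatMap_map]
    show xs.flatMap (fun x => x :: (cyc u x).tail) = xs.flatMap (cyc u)
    apply List.flatMap_congr
    intro x _
    exact cyc_head_tail u x
  have hflat2 : cs.flatMap (fun p => p.1 :: p.2.reverse) = foataWord u⁻¹ := by
    rw [hcs, List.flatMap_map]
    show xs.flatMap (fun x => x :: ((cyc u x).tail).reverse) = foataWord u⁻¹
    rw [foataWord, hfilter]
    apply List.flatMap_congr
    intro x _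
    rw [cyc_inv u x]
  rw [← hflat1, ← hflat2]
  exact (phi_blocks cs h1 h2).symm

/-! ### One-line notation facts -/

theorem oneLineF_length (w : Equiv.Perm (Fin n)) : (oneLineF w).length = n := by
  simp [oneLineF]

theorem oneLineF_nodup (w : Equiv.Perm (Fin n)) : (oneLineF w).Nodup :=
  (List.nodup_finRange n).map w.injective

theorem oneLineF_getElem (w : Equiv.Perm (Fin n)) (i : ℕ) (hi : i < n) :
    (oneLineF w)[i]'(by rw [oneLineF_length]; exact hi) = w ⟨i, hi⟩ := by
  simp only [oneLineF, List.getElem_map, List.getElem_finRange]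
  congr 1

theorem oneLineF_inj : Function.Injective (oneLineF (n := n)) := by
  intro w1 w2 h
  apply Equiv.ext
  intro i
  have h1 := oneLineF_getElem w1 i.val i.isLt
  have h2 := oneLineF_getElem w2 i.val i.isLt
  have h3 : (oneLineF w1)[i.val]'(by rw [oneLineF_length]; exact i.isLt)
      = (oneLineF w2)[i.val]'(by rw [oneLineF_length]; exact i.isLt) := by
    exact List.getElem_of_eq h _
  rw [h1, h2] at h3
  simpa using h3

theorem exists_perm_word (v : List (Fin n)) (hv : v.Perm (List.finRange n)) :
    ∃ w : Equiv.Perm (Fin n), oneLineF w = v := by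
  have hlen : v.length = n := by rw [hv.length_eq, List.length_finRange]
  have hnd : v.Nodup := hv.symm.nodup (List.nodup_finRange n)
  let f : Fin n → Fin n := fun i => v[i.val]'(by omega)
  have hinj : Function.Injective f := by
    intro i j hij
    have := (hnd.getElem_inj_iff).1 hij
    exact Fin.ext this
  let w : Equiv.Perm (Fin n) := Equiv.ofBijective f (Finite.injective_iff_bijective.1 hinj)
  refine ⟨w, ?_⟩
  apply List.ext_getElem
  · rw [oneLineF_length, hlen]
  · intro i h1 h2
    rw [oneLineF_length] at h1
    rw [oneLineF_getElem w i h1]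
    show f ⟨i, h1⟩ = v[i]
    rfl

/-! ### Transfer -/

section transfer
variable (φ : Equiv.Perm (Fin n) → Equiv.Perm (Fin n))
  (hφ : ∀ w, ∃ u : Equiv.Perm (Fin n),
    foataWord u = (oneLineF w).reverse ∧ oneLineF (φ w) = foataWord u⁻¹)

include hφ

theorem word_phi (w : Equiv.Perm (Fin n)) : oneLineF (φ w) = Phi (oneLineF w) := by
  obtain ⟨u, h1, h2⟩ := hφ w
  rw [h2, foataWord_inv, h1, List.reverse_reverse]

theorem word_phi_iter (k : ℕ) (w : Equiv.Perm (Fin n)) :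
    oneLineF (φ^[k] w) = Phi^[k] (oneLineF w) := by
  induction k with
  | zero => rfl
  | succ k ih =>
      rw [Function.iterate_succ_apply', Function.iterate_succ_apply', ← ih,
        word_phi φ hφ]

theorem mp_transfer (w : Equiv.Perm (Fin n)) :
    Function.minimalPeriod φ w = Function.minimalPeriod Phi (oneLineF w) := by
  have hiff : ∀ k, Function.IsPeriodicPt φ k w ↔
      Function.IsPeriodicPt Phi k (oneLineF w) := by
    intro k
    constructor
    · intro h
      show Phi^[k] (oneLineF w) = oneLineF w
      rw [← word_phi_iter φ hφ k w]
      exact congrArg oneLineF h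
    · intro h
      show φ^[k] w = w
      apply oneLineF_inj
      rw [word_phi_iter φ hφ k w]
      exact h
  apply Nat.dvd_antisymm
  · exact Function.isPeriodicPt_iff_minimalPeriod_dvd.1
      ((hiff _).2 (Function.isPeriodicPt_minimalPeriod Phi (oneLineF w)))
  · exact Function.isPeriodicPt_iff_minimalPeriod_dvd.1
      ((hiff _).1 (Function.isPeriodicPt_minimalPeriod φ w))

theorem mp_eq_pow (w : Equiv.Perm (Fin n)) :
    Function.minimalPeriod φ w = 2 ^ Hh (oneLineF w) := by
  rw [mp_transfer φ hφ w]
  exact minimalPeriod_Phi _ (oneLineF_nodup w)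

end transfer

/-! ### The extremes of the height -/

theorem Hh_word_lower (hn : 2 ≤ n) (w : Equiv.Perm (Fin n)) :
    Nat.log 2 n ≤ Hh (oneLineF w) := by
  have h1 : (oneLineF w).length < 2 ^ (Hh (oneLineF w) + 1) :=
    length_lt_pow_Hh _ (oneLineF_nodup w)
  rw [oneLineF_length] at h1
  have := Nat.log_lt_of_lt_pow (b := 2) (by omega : n ≠ 0) h1
  omega

theorem exists_min_height_word (hn : 2 ≤ n) :
    ∃ w : Equiv.Perm (Fin n), Hh (oneLineF w) = Nat.log 2 n := by
  set v := balA n (List.finRange n) with hv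
  have hperm : v.Perm (List.finRange n) := balA_perm n _
  obtain ⟨w, hw⟩ := exists_perm_word v hperm
  refine ⟨w, le_antisymm ?_ (Hh_word_lower hn w)⟩
  rw [hw, hv]
  have := balA_Hh n (List.finRange n) (List.pairwise_lt_finRange n)
    (by rw [List.length_finRange]; omega)
  rwa [List.length_finRange] at this

end PhiProof


/-- For `n ≥ 2`, the GCD of the orbit sizes of
`φ = F ∘ I ∘ F⁻¹ ∘ R` acting on `S_n` equals `2^⌊log₂ n⌋`, the greatest power
of `2` that is at most `n`. -/
theorem phi_orbit_gcd (n : ℕ) (hn : 2 ≤ n)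
    (φ : Equiv.Perm (Fin n) → Equiv.Perm (Fin n))
    (hφ : ∀ w, IsPhi w (φ w)) :
    Finset.univ.gcd (fun w : Equiv.Perm (Fin n) => Function.minimalPeriod φ w) =
      2 ^ Nat.log 2 n := by
  classical
  have key : ∀ w, Function.minimalPeriod φ w = 2 ^ PhiProof.Hh (oneLineF w) :=
    fun w => PhiProof.mp_eq_pow φ (fun w' => hφ w') w
  obtain ⟨w₀, hw₀⟩ := PhiProof.exists_min_height_word (n := n) hn
  apply Nat.dvd_antisymm
  · have hg := Finset.gcd_dvd (f := fun w : Equiv.Perm (Fin n) =>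
      Function.minimalPeriod φ w) (Finset.mem_univ w₀)
    simpa only [key w₀, hw₀] using hg
  · apply Finset.dvd_gcd
    intro w _
    rw [key w]
    exact pow_dvd_pow 2 (PhiProof.Hh_word_lower hn w)
end
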